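/- arXiv:1201.2149 — 8 statements merged into one kernel-verified Lean document; each statement's English description precedes it below -/
import Mathlib

section
/- The cardinality of D_n is (n-1)!! = (n-1)(n-3)(n-5)···, the double factorial of n-1. -/
open Equiv

/-- Number of inversions of a permutation of `Fin n`. -/
def invNum {n : ℕ} (w : Perm (Fin n)) : ℕ :=
  (Finset.univ.filter (fun p : Fin n × Fin n => p.1 < p.2 ∧ w p.2 < w p.1)).card

/-- Number of excedances. -/
def excNum {n : ℕ} (w : Perm (Fin n)) : ℕ :=
  (Finset.univ.filter (fun i : Fin n => i < w i)).card

/-- Rank function on involutions: ℓ_(n)(π) = (ℓ(π)+exc(π))/2. -/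
def invLen {n : ℕ} (w : Perm (Fin n)) : ℕ := (invNum w + excNum w) / 2

/-- Richardson–Springer action of the simple transposition with 0-indexed index `i`. -/
def rsStep {n : ℕ} (i : ℕ) (π : Perm (Fin n)) : Perm (Fin n) :=
  if h : i + 1 < n then
    let a : Fin n := ⟨i, Nat.lt_of_succ_lt h⟩
    let b : Fin n := ⟨i + 1, h⟩
    if π⁻¹ b < π⁻¹ a then π
    else if π a = a ∧ π b = b then Equiv.swap a b * π
    else Equiv.swap a b * π * Equiv.swap a b
  else π

/-- Action of a word of simple transpositions. -/
def rsWord {n : ℕ} (l : List ℕ) (π : Perm (Fin n)) : Perm (Fin n) :=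
  l.foldr rsStep π

/-- The adjacent transposition `s_{i+1} = (i+1, i+2)` (0-indexed `i`). -/
def adjSwap (n : ℕ) (i : ℕ) : Perm (Fin n) :=
  if h : i + 1 < n then Equiv.swap ⟨i, Nat.lt_of_succ_lt h⟩ ⟨i + 1, h⟩ else 1

/-- `l` is a reduced word for `w`. -/
def IsReducedWord {n : ℕ} (l : List ℕ) (w : Perm (Fin n)) : Prop :=
  (∀ i ∈ l, i + 1 < n) ∧ (l.map (adjSwap n)).prod = w ∧ l.length = invNum w

/-- The "mirror" value `n+1-i` in 0-indexed terms. -/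
def mir {n : ℕ} (i : Fin n) : Fin n := ⟨n - 1 - (i : ℕ), by have := i.isLt; omega⟩

/-- The set `D_n`. -/
def Dset (n : ℕ) : Set (Perm (Fin n)) :=
  {w | ∀ i : Fin n, 2 * (i : ℕ) + 1 < n →
    w⁻¹ (mir i) < w⁻¹ i ∧
    ∀ j : Fin n, (i : ℕ) < (j : ℕ) → (j : ℕ) < n - 1 - (i : ℕ) →
      ¬(w⁻¹ (mir i) < w⁻¹ j ∧ w⁻¹ j < w⁻¹ i)}

/-- One-line notation (1-indexed values) of a permutation. -/
def oneLine {n : ℕ} (w : Perm (Fin n)) : List ℕ := List.ofFn fun k => (w k : ℕ) + 1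

namespace CD

variable {n : ℕ}

def insVal (v : Fin n) : Fin (n+2) := ⟨(v:ℕ)+1, by have := v.isLt; omega⟩

@[simp] lemma insVal_val (v : Fin n) : (insVal v : ℕ) = (v:ℕ)+1 := rfl

def insPos (p : Fin (n+1)) (i : Fin n) : Fin (n+2) :=
  if (i:ℕ) < (p:ℕ) then ⟨(i:ℕ), by have := i.isLt; omega⟩
  else ⟨(i:ℕ)+2, by have := i.isLt; omega⟩

lemma insPos_val (p : Fin (n+1)) (i : Fin n) :
    (insPos p i : ℕ) = if (i:ℕ) < (p:ℕ) then (i:ℕ) else (i:ℕ)+2 := by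
  simp only [insPos]
  split_ifs <;> rfl

lemma insPos_val_ne (p : Fin (n+1)) (i : Fin n) :
    (insPos p i : ℕ) ≠ (p:ℕ) ∧ (insPos p i : ℕ) ≠ (p:ℕ)+1 := by
  rw [insPos_val]; split_ifs <;> omega

lemma insPos_lt_iff (p : Fin (n+1)) (a b : Fin n) :
    insPos p a < insPos p b ↔ a < b := by
  simp only [Fin.lt_def, insPos_val]
  split_ifs <;> omega

lemma insPos_injective (p : Fin (n+1)) : Function.Injective (insPos p) := by
  have hm : StrictMono (insPos p) := fun a b h => (insPos_lt_iff p a b).mpr h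
  exact hm.injective

def FFun (p : Fin (n+1)) (u : Perm (Fin n)) (k : Fin (n+2)) : Fin (n+2) :=
  if h1 : (k:ℕ) < (p:ℕ) then insVal (u ⟨(k:ℕ), by have := p.isLt; omega⟩)
  else if h2 : (k:ℕ) = (p:ℕ) then ⟨n+1, by omega⟩
  else if h3 : (k:ℕ) = (p:ℕ)+1 then ⟨0, by omega⟩
  else insVal (u ⟨(k:ℕ)-2, by have := k.isLt; have := p.isLt; omega⟩)

def GFun (p : Fin (n+1)) (u : Perm (Fin n)) (v : Fin (n+2)) : Fin (n+2) :=
  if h1 : (v:ℕ) = 0 then ⟨(p:ℕ)+1, by have := p.isLt; omega⟩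
  else if h2 : (v:ℕ) = n+1 then ⟨(p:ℕ), by have := p.isLt; omega⟩
  else insPos p (u⁻¹ ⟨(v:ℕ)-1, by have := v.isLt; omega⟩)

lemma FFun_eq_top (p : Fin (n+1)) (u : Perm (Fin n)) (k : Fin (n+2)) (hk : (k:ℕ) = (p:ℕ)) :
    FFun p u k = ⟨n+1, by omega⟩ := by
  simp only [FFun]
  rw [dif_neg (by omega), dif_pos hk]

lemma FFun_eq_zero (p : Fin (n+1)) (u : Perm (Fin n)) (k : Fin (n+2)) (hk : (k:ℕ) = (p:ℕ)+1) :
    FFun p u k = ⟨0, by omega⟩ := by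
  simp only [FFun]
  rw [dif_neg (by omega), dif_neg (by omega), dif_pos hk]

lemma GFun_of_zero (p : Fin (n+1)) (u : Perm (Fin n)) (v : Fin (n+2)) (hv : (v:ℕ) = 0) :
    GFun p u v = ⟨(p:ℕ)+1, by have := p.isLt; omega⟩ := by
  simp only [GFun]
  rw [dif_pos hv]

lemma GFun_of_top (p : Fin (n+1)) (u : Perm (Fin n)) (v : Fin (n+2)) (hv : (v:ℕ) = n+1) :
    GFun p u v = ⟨(p:ℕ), by have := p.isLt; omega⟩ := by
  simp only [GFun]
  rw [dif_neg (by omega), dif_pos hv]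

lemma GFun_insVal (p : Fin (n+1)) (u : Perm (Fin n)) (v : Fin n) :
    GFun p u (insVal v) = insPos p (u⁻¹ v) := by
  have hv := v.isLt
  have hval : ((insVal v : Fin (n+2)) : ℕ) = (v:ℕ)+1 := rfl
  simp only [GFun]
  rw [dif_neg (by omega), dif_neg (by omega)]
  have e : (⟨((insVal v : Fin (n+2)) : ℕ)-1, by omega⟩ : Fin n) = v := Fin.ext (by simp only [Fin.val_mk]; omega)
  rw [e]

lemma FFun_insPos (p : Fin (n+1)) (u : Perm (Fin n)) (i : Fin n) :
    FFun p u (insPos p i) = insVal (u i) := by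
  have hi := i.isLt; have hp := p.isLt
  have hval := insPos_val p i
  by_cases h : (i:ℕ) < (p:ℕ)
  · rw [if_pos h] at hval
    simp only [FFun]
    rw [dif_pos (by omega)]
    have e : (⟨((insPos p i : Fin (n+2)) : ℕ), by omega⟩ : Fin n) = i := Fin.ext (by simp only [Fin.val_mk]; omega)
    rw [e]
  · rw [if_neg h] at hval
    simp only [FFun]
    rw [dif_neg (by omega), dif_neg (by omega), dif_neg (by omega)]
    have e : (⟨((insPos p i : Fin (n+2)) : ℕ)-2, by omega⟩ : Fin n) = i := Fin.ext (by simp only [Fin.val_mk]; omega)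
    rw [e]

lemma leftInv (p : Fin (n+1)) (u : Perm (Fin n)) :
    Function.LeftInverse (GFun p u) (FFun p u) := by
  intro k
  have hk := k.isLt; have hp := p.isLt
  by_cases h1 : (k:ℕ) < (p:ℕ)
  · have e : insPos p ⟨(k:ℕ), by omega⟩ = k := Fin.ext (by rw [insPos_val, if_pos h1])
    rw [← e, FFun_insPos, GFun_insVal, Perm.inv_def, Equiv.symm_apply_apply]
  · by_cases h2 : (k:ℕ) = (p:ℕ)
    · rw [FFun_eq_top p u k h2, GFun_of_top p u _ rfl]
      exact Fin.ext h2.symm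
    · by_cases h3 : (k:ℕ) = (p:ℕ)+1
      · rw [FFun_eq_zero p u k h3, GFun_of_zero p u _ rfl]
        exact Fin.ext h3.symm
      · have e : insPos p ⟨(k:ℕ)-2, by omega⟩ = k :=
          Fin.ext (by rw [insPos_val, if_neg (by simp only [Fin.val_mk]; omega)]
                      simp only [Fin.val_mk]; omega)
        rw [← e, FFun_insPos, GFun_insVal, Perm.inv_def, Equiv.symm_apply_apply]

def Fperm (p : Fin (n+1)) (u : Perm (Fin n)) : Perm (Fin (n+2)) :=
  ⟨FFun p u, GFun p u, leftInv p u,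
    (leftInv p u).rightInverse_of_surjective
      ((Finite.injective_iff_surjective).mp (leftInv p u).injective)⟩

lemma Fperm_apply_insPos (p : Fin (n+1)) (u : Perm (Fin n)) (i : Fin n) :
    Fperm p u (insPos p i) = insVal (u i) := FFun_insPos p u i

lemma Fperm_apply_of_eq_p (p : Fin (n+1)) (u : Perm (Fin n)) (k : Fin (n+2))
    (hk : (k:ℕ) = (p:ℕ)) : Fperm p u k = ⟨n+1, by omega⟩ := FFun_eq_top p u k hk

lemma Fperm_apply_of_eq_p1 (p : Fin (n+1)) (u : Perm (Fin n)) (k : Fin (n+2))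
    (hk : (k:ℕ) = (p:ℕ)+1) : Fperm p u k = ⟨0, by omega⟩ := FFun_eq_zero p u k hk

lemma Fperm_inv_insVal (p : Fin (n+1)) (u : Perm (Fin n)) (v : Fin n) :
    (Fperm p u)⁻¹ (insVal v) = insPos p (u⁻¹ v) := GFun_insVal p u v

lemma Fperm_inv_of_top (p : Fin (n+1)) (u : Perm (Fin n)) (v : Fin (n+2)) (hv : (v:ℕ) = n+1) :
    (Fperm p u)⁻¹ v = ⟨(p:ℕ), by have := p.isLt; omega⟩ := GFun_of_top p u v hv

lemma Fperm_inv_of_zero (p : Fin (n+1)) (u : Perm (Fin n)) (v : Fin (n+2)) (hv : (v:ℕ) = 0) :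
    (Fperm p u)⁻¹ v = ⟨(p:ℕ)+1, by have := p.isLt; omega⟩ := GFun_of_zero p u v hv

lemma mir_insVal (i : Fin n) : mir (insVal i) = insVal (mir i) := by
  have := i.isLt
  exact Fin.ext (by simp only [mir, insVal, Fin.val_mk]; omega)

end CD

namespace CD

variable {n : ℕ}

lemma Fperm_mem_iff (p : Fin (n+1)) (u : Perm (Fin n)) :
    Fperm p u ∈ Dset (n+2) ↔ u ∈ Dset n := by
  simp only [Dset, Set.mem_setOf_eq]
  constructor
  · intro h i hi
    have hii := i.isLt
    have h' := h (insVal i) (by simp only [insVal_val]; omega)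
    rw [mir_insVal, Fperm_inv_insVal, Fperm_inv_insVal] at h'
    obtain ⟨h1, h2⟩ := h'
    refine ⟨(insPos_lt_iff _ _ _).mp h1, ?_⟩
    intro j hj1 hj2 hcon
    have hji := j.isLt
    refine h2 (insVal j) (by simp only [insVal_val]; omega)
      (by simp only [insVal_val]; omega) ?_
    rw [Fperm_inv_insVal]
    exact ⟨(insPos_lt_iff _ _ _).mpr hcon.1, (insPos_lt_iff _ _ _).mpr hcon.2⟩
  · intro h i hi
    have hii := i.isLt
    have hp := p.isLt
    have hm : (mir i : ℕ) = n + 2 - 1 - (i:ℕ) := rfl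
    by_cases h0 : (i:ℕ) = 0
    · constructor
      · rw [Fperm_inv_of_top p u (mir i) (by omega), Fperm_inv_of_zero p u i h0]
        simp only [Fin.lt_def, Fin.val_mk]; omega
      · intro j hj1 hj2 hcon
        rw [Fperm_inv_of_top p u (mir i) (by omega), Fperm_inv_of_zero p u i h0] at hcon
        simp only [Fin.lt_def, Fin.val_mk] at hcon
        omega
    · have hi'b : (i:ℕ) - 1 < n := by omega
      set i' : Fin n := ⟨(i:ℕ)-1, hi'b⟩ with hi'def
      have hi'v : (i':ℕ) = (i:ℕ)-1 := rfl
      have hins : insVal i' = i := Fin.ext (by simp only [insVal_val, hi'v]; omega)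
      obtain ⟨h1, h2⟩ := h i' (by omega)
      constructor
      · rw [← hins, mir_insVal, Fperm_inv_insVal, Fperm_inv_insVal, insPos_lt_iff]
        exact h1
      · intro j hj1 hj2 hcon
        have hj'b : (j:ℕ) - 1 < n := by omega
        set j' : Fin n := ⟨(j:ℕ)-1, hj'b⟩ with hj'def
        have hj'v : (j':ℕ) = (j:ℕ)-1 := rfl
        have hjns : insVal j' = j := Fin.ext (by simp only [insVal_val, hj'v]; omega)
        rw [← hjns, ← hins, mir_insVal, Fperm_inv_insVal, Fperm_inv_insVal,
          Fperm_inv_insVal] at hcon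
        exact h2 j' (by omega) (by omega)
          ⟨(insPos_lt_iff _ _ _).mp hcon.1, (insPos_lt_iff _ _ _).mp hcon.2⟩

lemma Fperm_inj {p q : Fin (n+1)} {u v : Perm (Fin n)} (h : Fperm p u = Fperm q v) :
    p = q ∧ u = v := by
  have htop : (Fperm p u)⁻¹ ⟨n+1, by omega⟩ = (Fperm q v)⁻¹ ⟨n+1, by omega⟩ := by rw [h]
  rw [Fperm_inv_of_top p u _ rfl, Fperm_inv_of_top q v _ rfl] at htop
  have hpq : p = q := Fin.ext (by
    have := congrArg Fin.val htop
    simpa using this)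
  subst hpq
  refine ⟨rfl, ?_⟩
  apply Equiv.ext; intro x
  have hx : Fperm p u (insPos p x) = Fperm p v (insPos p x) := by rw [h]
  rw [Fperm_apply_insPos, Fperm_apply_insPos] at hx
  have h2 := congrArg Fin.val hx
  rw [insVal_val, insVal_val] at h2
  exact Fin.ext (by omega)

set_option maxHeartbeats 2000000 in
lemma exists_rep (w : Perm (Fin (n+2))) (hw : w ∈ Dset (n+2)) :
    ∃ (p : Fin (n+1)) (u : Perm (Fin n)), Fperm p u = w := by
  set i0 : Fin (n+2) := ⟨0, by omega⟩ with hi0def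
  have hi0v : (i0:ℕ) = 0 := rfl
  have hmv' : (mir i0 : ℕ) = n + 2 - 1 - (i0:ℕ) := rfl
  have hmv : (mir i0 : ℕ) = n+1 := by omega
  obtain ⟨hlt, hbet⟩ := hw i0 (by omega)
  set a := w⁻¹ (mir i0) with ha
  set b := w⁻¹ i0 with hb
  have hab : (a:ℕ) < (b:ℕ) := Fin.lt_def.mp hlt
  have hbv := b.isLt
  have hb1 : (b:ℕ) = (a:ℕ)+1 := by
    by_contra hcne
    have hlt2 : (a:ℕ)+1 < (b:ℕ) := by omega
    set c := w ⟨(a:ℕ)+1, by omega⟩ with hcdef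
    have hcv := c.isLt
    have hwc : w⁻¹ c = ⟨(a:ℕ)+1, by omega⟩ := by rw [hcdef]; exact w.symm_apply_apply _
    have hc0 : (c:ℕ) ≠ 0 := by
      intro h00
      have e : c = i0 := Fin.ext (by omega)
      have e2 : w⁻¹ c = b := by rw [e]
      rw [hwc] at e2
      have := congrArg Fin.val e2
      simp only [Fin.val_mk] at this
      omega
    have hctop : (c:ℕ) ≠ n+1 := by
      intro h00
      have e : c = mir i0 := Fin.ext (by omega)
      have e2 : w⁻¹ c = a := by rw [e]
      rw [hwc] at e2
      have := congrArg Fin.val e2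
      simp only [Fin.val_mk] at this
      omega
    refine hbet c (by omega) (by omega) ⟨?_, ?_⟩
    · rw [hwc]; exact Fin.lt_def.mpr (by simp only [Fin.val_mk]; omega)
    · rw [hwc]; exact Fin.lt_def.mpr (by simp only [Fin.val_mk]; omega)
  set p : Fin (n+1) := ⟨(a:ℕ), by omega⟩ with hpdef
  have hpa : (p:ℕ) = (a:ℕ) := rfl
  have key : ∀ i : Fin n, 1 ≤ (w (insPos p i) : ℕ) ∧ (w (insPos p i) : ℕ) ≤ n := by
    intro i
    have hne := insPos_val_ne p i
    have hwlt := (w (insPos p i)).isLt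
    constructor
    · by_contra hcc
      have e : w (insPos p i) = i0 := Fin.ext (by omega)
      have e2 : insPos p i = b := by rw [hb, ← e, Perm.inv_def, Equiv.symm_apply_apply]
      have := congrArg Fin.val e2
      omega
    · by_contra hcc
      have e : w (insPos p i) = mir i0 := Fin.ext (by omega)
      have e2 : insPos p i = a := by rw [ha, ← e, Perm.inv_def, Equiv.symm_apply_apply]
      have := congrArg Fin.val e2
      omega
  have hinj : Function.Injective
      (fun i : Fin n => (⟨(w (insPos p i) : ℕ) - 1, by have := key i; omega⟩ : Fin n)) := by
    intro x y hxy
    have hx := key x; have hy := key y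
    have h1 := congrArg Fin.val hxy
    simp only [Fin.val_mk] at h1
    have h2 : w (insPos p x) = w (insPos p y) := Fin.ext (by omega)
    exact insPos_injective p (w.injective h2)
  set u : Perm (Fin n) := Equiv.ofBijective _ ((Finite.injective_iff_bijective).mp hinj)
    with hu
  have huap : ∀ i : Fin n, (u i : ℕ) = (w (insPos p i) : ℕ) - 1 := fun i => rfl
  have hins : ∀ i : Fin n, insVal (u i) = w (insPos p i) := by
    intro i
    have hk2 := key i
    exact Fin.ext (by rw [insVal_val, huap i]; omega)
  refine ⟨p, u, ?_⟩
  apply Equiv.ext; intro k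
  have hk := k.isLt
  by_cases h1 : (k:ℕ) < (p:ℕ)
  · have e : insPos p ⟨(k:ℕ), by omega⟩ = k := Fin.ext
      (by rw [insPos_val]; simp only [Fin.val_mk]; rw [if_pos h1])
    rw [← e, Fperm_apply_insPos]
    exact hins _
  · by_cases h2 : (k:ℕ) = (p:ℕ)
    · rw [Fperm_apply_of_eq_p p u k h2]
      have ek : k = a := Fin.ext (by omega)
      have ew : w a = mir i0 := by rw [ha, Perm.inv_def, Equiv.apply_symm_apply]
      rw [ek, ew]
      exact Fin.ext (by simp only [Fin.val_mk]; omega)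
    · by_cases h3 : (k:ℕ) = (p:ℕ)+1
      · rw [Fperm_apply_of_eq_p1 p u k h3]
        have ek : k = b := Fin.ext (by omega)
        have ew : w b = i0 := by rw [hb, Perm.inv_def, Equiv.apply_symm_apply]
        rw [ek, ew]
      · have e : insPos p ⟨(k:ℕ)-2, by omega⟩ = k := Fin.ext
          (by rw [insPos_val]; simp only [Fin.val_mk]; rw [if_neg (by omega)]; omega)
        rw [← e, Fperm_apply_insPos]
        exact hins _

def pack (n : ℕ) (x : Fin (n+1) × (Dset n)) : (Dset (n+2)) :=
  ⟨Fperm x.1 x.2.1, (Fperm_mem_iff x.1 x.2.1).mpr x.2.2⟩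

lemma pack_bijective (n : ℕ) : Function.Bijective (pack n) := by
  constructor
  · rintro ⟨p, u, hu⟩ ⟨q, v, hv⟩ h
    have h' : Fperm p u = Fperm q v := congrArg Subtype.val h
    obtain ⟨h1, h2⟩ := Fperm_inj h'
    subst h1; subst h2; rfl
  · rintro ⟨w, hw⟩
    obtain ⟨p, u, hpu⟩ := exists_rep w hw
    have hu : u ∈ Dset n := (Fperm_mem_iff p u).mp (by rw [hpu]; exact hw)
    exact ⟨⟨p, ⟨u, hu⟩⟩, Subtype.ext hpu⟩

lemma step (n : ℕ) : (Dset (n+2)).ncard = (n+1) * (Dset n).ncard := by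
  rw [← Nat.card_coe_set_eq, ← Nat.card_coe_set_eq,
    ← Nat.card_eq_of_bijective _ (pack_bijective n), Nat.card_prod]
  congr 1
  simp [Nat.card_eq_fintype_card]

end CD


/-- `#D_n = (n-1)!!`. -/
theorem card_Dset (n : ℕ) : Set.ncard (Dset n) = Nat.doubleFactorial (n - 1) := by
  induction n using Nat.strong_induction_on with
  | _ n ih =>
    match n, ih with
    | 0, _ =>
      have h : Dset 0 = Set.univ := Set.eq_univ_of_forall (fun w => fun i => i.elim0)
      rw [h, Set.ncard_univ]
      simp [Nat.card_eq_fintype_card, Nat.doubleFactorial]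
    | 1, _ =>
      have h : Dset 1 = Set.univ :=
        Set.eq_univ_of_forall (fun w => fun i hi => absurd hi (by omega))
      rw [h, Set.ncard_univ]
      simp [Nat.card_eq_fintype_card, Nat.doubleFactorial]
    | (m+2), ih =>
      rw [CD.step m, ih m (by omega)]
      match m with
      | 0 => simp [Nat.doubleFactorial]
      | (k+1) => rfl
end

section
/- For every w ∈ D_n with n ≥ 2, in the one-line notation of w, the value n appears immediately to the left of the value 1; that is, w⁻¹(1) = w⁻¹(n) + 1. -/
open Equiv

lemma aux_Dn (n : ℕ) (hn : 2 ≤ n) (w : Perm (Fin n)) (x y : Fin n)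
    (hx : (x : ℕ) = 0) (hy : (y : ℕ) = n - 1)
    (hlt : w⁻¹ y < w⁻¹ x)
    (hno : ∀ j : Fin n, 0 < (j : ℕ) → (j : ℕ) < n - 1 →
      ¬(w⁻¹ y < w⁻¹ j ∧ w⁻¹ j < w⁻¹ x)) :
    ((w⁻¹ x : Fin n) : ℕ) = ((w⁻¹ y : Fin n) : ℕ) + 1 := by
  by_contra hne
  have hab : ((w⁻¹ y : Fin n) : ℕ) + 1 < ((w⁻¹ x : Fin n) : ℕ) := by
    have := Fin.lt_def.mp hlt; omega
  have hpn : ((w⁻¹ y : Fin n) : ℕ) + 1 < n := lt_trans hab (w⁻¹ x).isLt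
  set p : Fin n := ⟨((w⁻¹ y : Fin n) : ℕ) + 1, hpn⟩ with hp
  have hwj : w⁻¹ (w p) = p := by simp
  have hj0 : 0 < ((w p : Fin n) : ℕ) := by
    rcases Nat.eq_zero_or_pos ((w p : Fin n) : ℕ) |>.symm with h | h
    · exact h
    · exfalso
      have h1 : w p = x := Fin.ext (by omega)
      rw [h1] at hwj
      have := congrArg Fin.val hwj
      simp [hp] at this
      simp only [Equiv.Perm.inv_def] at *
      omega
  have hjn : ((w p : Fin n) : ℕ) < n - 1 := by
    have hlt' := (w p).isLt
    rcases Nat.lt_or_ge ((w p : Fin n) : ℕ) (n - 1) with h | h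
    · exact h
    · exfalso
      have h1 : w p = y := Fin.ext (by omega)
      rw [h1] at hwj
      have := congrArg Fin.val hwj
      simp [hp] at this
  refine hno (w p) hj0 hjn ⟨?_, ?_⟩
  · rw [hwj]; exact Fin.lt_def.mpr (by simp [hp])
  · rw [hwj]; exact Fin.lt_def.mpr (by simpa [hp] using hab)

/-- for `w ∈ D_n`, the value `n` appears immediately to the left of `1`. -/
theorem Dset_n_left_of_one (n : ℕ) (hn : 2 ≤ n) (w : Perm (Fin n)) (hw : w ∈ Dset n) :
    ((w⁻¹ ⟨0, by omega⟩ : Fin n) : ℕ) = ((w⁻¹ ⟨n - 1, by omega⟩ : Fin n) : ℕ) + 1 := by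
  obtain ⟨hlt, hno⟩ := hw ⟨0, by omega⟩ (by simp; omega)
  have hm : (mir (⟨0, by omega⟩ : Fin n)) = ⟨n - 1, by omega⟩ := by
    simp [mir]
  rw [hm] at hlt hno
  exact aux_Dn n hn w _ _ rfl rfl hlt (fun j hj1 hj2 => hno j (by simpa using hj1) (by simpa using hj2))
end

section
/- Deleting the adjacent pair of values n,1 from the one-line notation of an element w ∈ D_n, and then decreasing each remaining entry by one, yields an element of D_{n-2}; moreover this map D_n × {positions} → D_{n-2} realizes the recursion |D_n| = (n-1)|D_{n-2}|. -/
open Equiv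

namespace DDel


def liftp (p k : ℕ) : ℕ := if k < p then k else k + 2

lemma liftp_lt_liftp (p a b : ℕ) : liftp p a < liftp p b ↔ a < b := by
  unfold liftp; split_ifs <;> omega

def Wof {N : ℕ} (u : Perm (Fin N)) : ℕ → ℕ :=
  fun j => if h : j < N then (u ⟨j, h⟩ : ℕ) else 0

lemma Wof_lt {N : ℕ} (u : Perm (Fin N)) {j : ℕ} (h : j < N) : Wof u j < N := by
  simp only [Wof, dif_pos h]
  exact (u ⟨j, h⟩).isLt

lemma perm_inv_apply_self {α : Type*} (f : Perm α) (x : α) : f⁻¹ (f x) = x := by simp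

lemma perm_apply_inv_self {α : Type*} (f : Perm α) (x : α) : f (f⁻¹ x) = x := by simp

lemma Wof_inv_Wof {N : ℕ} (u : Perm (Fin N)) {j : ℕ} (h : j < N) :
    Wof u⁻¹ (Wof u j) = j := by
  have h1 : Wof u j = (u ⟨j, h⟩ : ℕ) := dif_pos h
  have h2 : Wof u j < N := h1 ▸ (u ⟨j, h⟩).isLt
  rw [Wof]
  simp only [dif_pos h2]
  have h3 : (⟨Wof u j, h2⟩ : Fin N) = u ⟨j, h⟩ := Fin.ext h1
  rw [h3, perm_inv_apply_self]

def aF (m p : ℕ) (W : ℕ → ℕ) (k : ℕ) : ℕ :=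
  if k < p then W k + 1 else if k = p then m + 1 else if k = p + 1 then 0 else W (k - 2) + 1

def aG (m p : ℕ) (W' : ℕ → ℕ) (v : ℕ) : ℕ :=
  if v = 0 then p + 1 else if v = m + 1 then p else liftp p (W' (v - 1))

variable {m : ℕ}

lemma aF_lt (p : ℕ) (hp : p ≤ m) (w' : Perm (Fin m)) {k : ℕ} (hk : k < m + 2) :
    aF m p (Wof w') k < m + 2 := by
  unfold aF; split_ifs with h1 h2 h3
  · have := Wof_lt w' (show k < m by omega); omega
  · omega
  · omega
  · have := Wof_lt w' (show k - 2 < m by omega); omega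

lemma aG_lt (p : ℕ) (hp : p ≤ m) (w' : Perm (Fin m)) {v : ℕ} (hv : v < m + 2) :
    aG m p (Wof w'⁻¹) v < m + 2 := by
  unfold aG; split_ifs with h1 h2
  · omega
  · omega
  · have := Wof_lt w'⁻¹ (show v - 1 < m by omega)
    unfold liftp; split_ifs <;> omega

lemma aG_aF (p : ℕ) (hp : p ≤ m) (w' : Perm (Fin m)) {k : ℕ} (hk : k < m + 2) :
    aG m p (Wof w'⁻¹) (aF m p (Wof w') k) = k := by
  unfold aF; split_ifs with h1 h2 h3
  · have hkm : k < m := by omega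
    have hw := Wof_lt w' hkm
    unfold aG
    rw [if_neg (by omega), if_neg (by omega), Nat.add_sub_cancel, Wof_inv_Wof w' hkm]
    unfold liftp; rw [if_pos h1]
  · unfold aG; rw [if_neg (by omega), if_pos rfl]; omega
  · unfold aG; rw [if_pos rfl]; omega
  · have hkm : k - 2 < m := by omega
    have hw := Wof_lt w' hkm
    unfold aG
    rw [if_neg (by omega), if_neg (by omega), Nat.add_sub_cancel, Wof_inv_Wof w' hkm]
    unfold liftp; rw [if_neg (by omega)]; omega

lemma aF_aG (p : ℕ) (hp : p ≤ m) (w' : Perm (Fin m)) {v : ℕ} (hv : v < m + 2) :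
    aF m p (Wof w') (aG m p (Wof w'⁻¹) v) = v := by
  unfold aG; split_ifs with h1 h2
  · unfold aF; rw [if_neg (by omega), if_neg (by omega), if_pos rfl]; omega
  · unfold aF; rw [if_neg (by omega), if_pos rfl]; omega
  · have hv1 : v - 1 < m := by omega
    have hq := Wof_lt w'⁻¹ hv1
    have hWW : Wof w' (Wof w'⁻¹ (v - 1)) = v - 1 := by
      have := Wof_inv_Wof w'⁻¹ hv1; rwa [inv_inv] at this
    unfold liftp
    by_cases hqp : Wof w'⁻¹ (v - 1) < p
    · rw [if_pos hqp]; unfold aF; rw [if_pos hqp, hWW]; omega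
    · rw [if_neg hqp]; unfold aF
      rw [if_neg (by omega), if_neg (by omega), if_neg (by omega), Nat.add_sub_cancel, hWW]
      omega

def insPerm (p : Fin (m + 1)) (w' : Perm (Fin m)) : Perm (Fin (m + 2)) where
  toFun k := ⟨aF m p (Wof w') k, aF_lt p p.is_le w' k.isLt⟩
  invFun v := ⟨aG m p (Wof w'⁻¹) v, aG_lt p p.is_le w' v.isLt⟩
  left_inv k := Fin.ext (aG_aF p p.is_le w' k.isLt)
  right_inv v := Fin.ext (aF_aG p p.is_le w' v.isLt)

lemma insPerm_apply (p : Fin (m + 1)) (w' : Perm (Fin m)) (k : Fin (m + 2)) :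
    (insPerm p w' k : ℕ) = aF m p (Wof w') k := rfl

lemma insPerm_inv (p : Fin (m + 1)) (w' : Perm (Fin m)) (v : Fin (m + 2)) :
    ((insPerm p w')⁻¹ v : ℕ) = aG m p (Wof w'⁻¹) v := rfl


variable (p : Fin (m + 1)) (w' : Perm (Fin m))

lemma insPerm_inv_pos (v : Fin (m + 2)) (t : Fin m) (hv : (v : ℕ) = (t : ℕ) + 1) :
    (((insPerm p w')⁻¹ v : Fin (m + 2)) : ℕ) = liftp p ((w'⁻¹ t : Fin m) : ℕ) := by
  have ht := t.isLt
  rw [insPerm_inv]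
  unfold aG
  rw [if_neg (by omega), if_neg (by omega)]
  congr 1
  rw [hv, Nat.add_sub_cancel]
  unfold Wof
  rw [dif_pos ht]

lemma insPerm_inv_pos0 (v : Fin (m + 2)) (hv : (v : ℕ) = 0) :
    (((insPerm p w')⁻¹ v : Fin (m + 2)) : ℕ) = (p : ℕ) + 1 := by
  rw [insPerm_inv]; unfold aG; rw [if_pos hv]

lemma insPerm_inv_posTop (v : Fin (m + 2)) (hv : (v : ℕ) = m + 1) :
    (((insPerm p w')⁻¹ v : Fin (m + 2)) : ℕ) = (p : ℕ) := by
  rw [insPerm_inv]; unfold aG; rw [if_neg (by omega), if_pos hv]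

lemma mem_iff : insPerm p w' ∈ Dset (m + 2) ↔ w' ∈ Dset m := by
  constructor
  · intro hw i' hi'
    have hi'm : (i' : ℕ) < m := by omega
    obtain ⟨h1, h2⟩ := hw ⟨(i' : ℕ) + 1, by omega⟩
      (by simpa using (by omega : 2 * ((i' : ℕ) + 1) + 1 < m + 2))
    have e1 := insPerm_inv_pos p w' (mir (⟨(i' : ℕ) + 1, by omega⟩ : Fin (m + 2))) (mir i')
      (by simp [mir]; omega)
    have e2 := insPerm_inv_pos p w' ⟨(i' : ℕ) + 1, by omega⟩ i' (by simp)
    constructor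
    · rw [Fin.lt_def] at h1 ⊢
      rw [e1, e2, liftp_lt_liftp] at h1
      exact h1
    · intro j' hj1 hj2 hcon
      have hj'm : (j' : ℕ) < m := by omega
      refine h2 ⟨(j' : ℕ) + 1, by omega⟩
        (by simpa using (by omega : (i' : ℕ) + 1 < (j' : ℕ) + 1))
        (by simpa using (by omega : (j' : ℕ) + 1 < m + 2 - 1 - ((i' : ℕ) + 1))) ?_
      have e3 := insPerm_inv_pos p w' ⟨(j' : ℕ) + 1, by omega⟩ j' (by simp)
      rw [Fin.lt_def, Fin.lt_def] at hcon ⊢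
      rw [e1, e2, e3, liftp_lt_liftp, liftp_lt_liftp]
      exact hcon
  · intro hw' i hi
    rcases Nat.eq_zero_or_pos (i : ℕ) with hiz | hipos
    · have hmir : ((mir i) : ℕ) = m + 1 := by simp [mir]; omega
      have e1 := insPerm_inv_posTop p w' (mir i) hmir
      have e2 := insPerm_inv_pos0 p w' i hiz
      constructor
      · rw [Fin.lt_def, e1, e2]; omega
      · intro j hj1 hj2 hcon
        rw [Fin.lt_def, Fin.lt_def, e1, e2] at hcon
        omega
    · have him : (i : ℕ) - 1 < m := by omega
      obtain ⟨h1, h2⟩ := hw' ⟨(i : ℕ) - 1, him⟩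
        (by simpa using (by omega : 2 * ((i : ℕ) - 1) + 1 < m))
      have e1 := insPerm_inv_pos p w' (mir i) (mir (⟨(i : ℕ) - 1, him⟩ : Fin m))
        (by simp [mir]; omega)
      have e2 := insPerm_inv_pos p w' i ⟨(i : ℕ) - 1, him⟩ (by simp; omega)
      constructor
      · rw [Fin.lt_def, e1, e2, liftp_lt_liftp]
        rw [Fin.lt_def] at h1
        exact h1
      · intro j hj1 hj2 hcon
        have hjm : (j : ℕ) - 1 < m := by omega
        have e3 := insPerm_inv_pos p w' j ⟨(j : ℕ) - 1, hjm⟩ (by simp; omega)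
        rw [Fin.lt_def, Fin.lt_def, e1, e2, e3, liftp_lt_liftp, liftp_lt_liftp] at hcon
        exact h2 ⟨(j : ℕ) - 1, hjm⟩ (by simpa using (by omega : (i : ℕ) - 1 < (j : ℕ) - 1))
          (by simpa using (by omega : (j : ℕ) - 1 < m - 1 - ((i : ℕ) - 1))) hcon


lemma aF_liftp (q : ℕ) (hq : q ≤ m) (u : Perm (Fin m)) (k : Fin m) :
    aF m q (Wof u) (liftp q k) = (u k : ℕ) + 1 := by
  have hk := k.isLt
  by_cases h1 : (k : ℕ) < q
  · rw [show liftp q (k : ℕ) = (k : ℕ) from if_pos h1]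
    unfold aF; rw [if_pos h1]
    unfold Wof; rw [dif_pos hk]
  · rw [show liftp q (k : ℕ) = (k : ℕ) + 2 from if_neg h1]
    unfold aF
    rw [if_neg (by omega), if_neg (by omega), if_neg (by omega), Nat.add_sub_cancel]
    unfold Wof; rw [dif_pos hk]

lemma insPerm_inj {p1 p2 : Fin (m + 1)} {w1 w2 : Perm (Fin m)}
    (h : insPerm p1 w1 = insPerm p2 w2) : p1 = p2 ∧ w1 = w2 := by
  have hp : (p1 : ℕ) = (p2 : ℕ) := by
    have h1 := insPerm_inv_posTop p1 w1 ⟨m + 1, by omega⟩ rfl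
    have h2 := insPerm_inv_posTop p2 w2 ⟨m + 1, by omega⟩ rfl
    rw [h] at h1; omega
  refine ⟨Fin.ext hp, ?_⟩
  apply Equiv.ext; intro k
  have hk2 : liftp p1 k < m + 2 := by
    have := k.isLt; have := p1.is_le; unfold liftp; split_ifs <;> omega
  have hcc := congrArg (fun u : Perm (Fin (m + 2)) => (u ⟨liftp (p1 : ℕ) (k : ℕ), hk2⟩ : ℕ)) h
  simp only [insPerm_apply] at hcc
  rw [← hp, aF_liftp (p1 : ℕ) p1.is_le w1 k, aF_liftp (p1 : ℕ) p1.is_le w2 k] at hcc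
  exact Fin.ext (by omega)

section Del

variable {w : Perm (Fin (m + 2))} {a : ℕ} (ha : a + 1 < m + 2)

lemma w_ne_top (hwa : w ⟨a, by omega⟩ = ⟨m + 1, by omega⟩) (x : Fin (m + 2))
    (hx : (x : ℕ) ≠ a) : ((w x) : ℕ) ≠ m + 1 := by
  intro hc
  apply hx
  have h1 : w x = w ⟨a, by omega⟩ := by rw [hwa]; exact Fin.ext hc
  exact congrArg Fin.val (w.injective h1)

lemma w_ne_zero (hwb : w ⟨a + 1, ha⟩ = ⟨0, by omega⟩) (x : Fin (m + 2))
    (hx : (x : ℕ) ≠ a + 1) : ((w x) : ℕ) ≠ 0 := by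
  intro hc
  apply hx
  have h1 : w x = w ⟨a + 1, ha⟩ := by rw [hwb]; exact Fin.ext hc
  exact congrArg Fin.val (w.injective h1)

variable (hwa : w ⟨a, by omega⟩ = ⟨m + 1, by omega⟩) (hwb : w ⟨a + 1, ha⟩ = ⟨0, by omega⟩)

def dF (w : Perm (Fin (m + 2))) (a k : ℕ) : ℕ := Wof w (liftp a k) - 1

def dG (w : Perm (Fin (m + 2))) (a v : ℕ) : ℕ :=
  if Wof w⁻¹ (v + 1) < a then Wof w⁻¹ (v + 1) else Wof w⁻¹ (v + 1) - 2

include ha in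
lemma liftp_facts {k : ℕ} (hk : k < m) :
    liftp a k < m + 2 ∧ liftp a k ≠ a ∧ liftp a k ≠ a + 1 := by
  unfold liftp; split_ifs <;> omega

include ha hwa hwb in
lemma Wof_liftp_bounds {k : ℕ} (hk : k < m) :
    1 ≤ Wof w (liftp a k) ∧ Wof w (liftp a k) ≤ m := by
  have hl := liftp_facts ha hk
  have e : Wof w (liftp a k) = ((w ⟨liftp a k, hl.1⟩) : ℕ) := dif_pos hl.1
  have h1 := w_ne_top ha hwa ⟨liftp a k, hl.1⟩ hl.2.1
  have h2 := w_ne_zero ha hwb ⟨liftp a k, hl.1⟩ hl.2.2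
  have h3 := (w ⟨liftp a k, hl.1⟩).isLt
  omega

include ha hwa hwb in
lemma dF_lt {k : ℕ} (hk : k < m) : dF w a k < m := by
  have := Wof_liftp_bounds ha hwa hwb hk
  unfold dF; omega

include ha hwa hwb in
lemma q_facts {v : ℕ} (hv : v < m) :
    Wof w⁻¹ (v + 1) < m + 2 ∧ Wof w⁻¹ (v + 1) ≠ a ∧ Wof w⁻¹ (v + 1) ≠ a + 1 := by
  have hv2 : v + 1 < m + 2 := by omega
  have e : Wof w⁻¹ (v + 1) = ((w⁻¹ ⟨v + 1, hv2⟩) : ℕ) := dif_pos hv2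
  refine ⟨by rw [e]; exact (w⁻¹ ⟨v + 1, hv2⟩).isLt, ?_, ?_⟩
  · intro hc
    have h1 : w⁻¹ ⟨v + 1, hv2⟩ = ⟨a, by omega⟩ :=
      Fin.ext (show ((w⁻¹ ⟨v + 1, hv2⟩ : Fin (m + 2)) : ℕ) = a by omega)
    have h2 : (⟨v + 1, hv2⟩ : Fin (m + 2)) = w ⟨a, by omega⟩ := by
      rw [← h1, perm_apply_inv_self]
    rw [hwa] at h2
    have := congrArg Fin.val h2
    simp at this; omega
  · intro hc
    have h1 : w⁻¹ ⟨v + 1, hv2⟩ = ⟨a + 1, ha⟩ :=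
      Fin.ext (show ((w⁻¹ ⟨v + 1, hv2⟩ : Fin (m + 2)) : ℕ) = a + 1 by omega)
    have h2 : (⟨v + 1, hv2⟩ : Fin (m + 2)) = w ⟨a + 1, ha⟩ := by
      rw [← h1, perm_apply_inv_self]
    rw [hwb] at h2
    have := congrArg Fin.val h2
    simp at this

include ha hwa hwb in
lemma dG_lt {v : ℕ} (hv : v < m) : dG w a v < m := by
  have := q_facts ha hwa hwb hv
  unfold dG; split_ifs <;> omega

include ha hwa hwb in
lemma dG_dF {k : ℕ} (hk : k < m) : dG w a (dF w a k) = k := by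
  have hb := Wof_liftp_bounds ha hwa hwb hk
  have hl := liftp_facts ha hk
  have e1 : dF w a k + 1 = Wof w (liftp a k) := by unfold dF; omega
  unfold dG
  rw [e1, Wof_inv_Wof w hl.1]
  unfold liftp
  split_ifs with h1 h2 h3 <;> omega

include ha hwa hwb in
lemma dF_dG {v : ℕ} (hv : v < m) : dF w a (dG w a v) = v := by
  have hq := q_facts ha hwa hwb hv
  have e2 : liftp a (dG w a v) = Wof w⁻¹ (v + 1) := by
    unfold dG liftp; split_ifs <;> omega
  have e3 : Wof w (Wof w⁻¹ (v + 1)) = v + 1 := by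
    have := Wof_inv_Wof w⁻¹ (show v + 1 < m + 2 by omega)
    rwa [inv_inv] at this
  unfold dF
  rw [e2, e3]
  omega

def delPerm : Perm (Fin m) where
  toFun k := ⟨dF w a k, dF_lt ha hwa hwb k.isLt⟩
  invFun v := ⟨dG w a v, dG_lt ha hwa hwb v.isLt⟩
  left_inv k := Fin.ext (dG_dF ha hwa hwb k.isLt)
  right_inv v := Fin.ext (dF_dG ha hwa hwb v.isLt)

include ha hwa hwb in
lemma ins_del : insPerm ⟨a, by omega⟩ (delPerm ha hwa hwb) = w := by
  apply Equiv.ext; intro k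
  apply Fin.ext
  rw [insPerm_apply]
  show aF m a (Wof (delPerm ha hwa hwb)) (k : ℕ) = ((w k) : ℕ)
  have hk := k.isLt
  have hWd : ∀ j (hj : j < m), Wof (delPerm ha hwa hwb) j = dF w a j := by
    intro j hj; unfold Wof; rw [dif_pos hj]; rfl
  have hWw : ∀ (x : Fin (m + 2)), Wof w (x : ℕ) = ((w x) : ℕ) := by
    intro x; unfold Wof; rw [dif_pos x.isLt]
  unfold aF
  split_ifs with h1 h2 h3
  · have hkm : (k : ℕ) < m := by omega
    rw [hWd _ hkm]
    have hb := Wof_liftp_bounds ha hwa hwb hkm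
    have hlk : liftp a (k : ℕ) = (k : ℕ) := if_pos h1
    unfold dF
    rw [hlk] at hb ⊢
    rw [show Wof w (k : ℕ) = ((w k) : ℕ) from hWw k] at hb ⊢
    omega
  · have : k = (⟨a, by omega⟩ : Fin (m + 2)) := Fin.ext h2
    rw [this, hwa]
  · have : k = (⟨a + 1, ha⟩ : Fin (m + 2)) := Fin.ext h3
    rw [this, hwb]
  · have hkm : (k : ℕ) - 2 < m := by omega
    rw [hWd _ hkm]
    have hb := Wof_liftp_bounds ha hwa hwb hkm
    have hlk : liftp a ((k : ℕ) - 2) = (k : ℕ) := by unfold liftp; split_ifs <;> omega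
    unfold dF
    rw [hlk] at hb ⊢
    rw [show Wof w (k : ℕ) = ((w k) : ℕ) from hWw k] at hb ⊢
    omega

end Del


lemma exists_adj {w : Perm (Fin (m + 2))} (hw : w ∈ Dset (m + 2)) :
    ∃ (a : ℕ) (h1 : a + 1 < m + 2),
      w ⟨a, Nat.lt_of_succ_lt h1⟩ = ⟨m + 1, Nat.lt_succ_self (m + 1)⟩ ∧
        w ⟨a + 1, h1⟩ = ⟨0, Nat.succ_pos (m + 1)⟩ := by
  have hz : (0 : ℕ) < m + 2 := Nat.succ_pos _
  obtain ⟨h1, h2⟩ := hw ⟨0, hz⟩ (by simpa using (by omega : 2 * 0 + 1 < m + 2))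
  rw [Fin.lt_def] at h1
  have hmir : ((mir (⟨0, hz⟩ : Fin (m + 2))) : ℕ) = m + 1 := by simp [mir]
  have hBlt := (w⁻¹ (⟨0, hz⟩ : Fin (m + 2))).isLt
  have hadj : ((w⁻¹ (⟨0, hz⟩ : Fin (m + 2))) : ℕ)
      = ((w⁻¹ (mir (⟨0, hz⟩ : Fin (m + 2)))) : ℕ) + 1 := by
    by_contra hc
    have hxlt : ((w⁻¹ (mir (⟨0, hz⟩ : Fin (m + 2)))) : ℕ) + 1 < m + 2 := by omega
    have hxj : w⁻¹ (w ⟨((w⁻¹ (mir (⟨0, hz⟩ : Fin (m + 2)))) : ℕ) + 1, hxlt⟩)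
        = ⟨((w⁻¹ (mir (⟨0, hz⟩ : Fin (m + 2)))) : ℕ) + 1, hxlt⟩ := perm_inv_apply_self w _
    have hj0 : ((w ⟨((w⁻¹ (mir (⟨0, hz⟩ : Fin (m + 2)))) : ℕ) + 1, hxlt⟩) : ℕ) ≠ 0 := by
      intro hc0
      have he : w ⟨((w⁻¹ (mir (⟨0, hz⟩ : Fin (m + 2)))) : ℕ) + 1, hxlt⟩
          = (⟨0, hz⟩ : Fin (m + 2)) := Fin.ext hc0
      rw [he] at hxj
      have hcc : ((w⁻¹ (⟨0, hz⟩ : Fin (m + 2))) : ℕ)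
          = ((w⁻¹ (mir (⟨0, hz⟩ : Fin (m + 2)))) : ℕ) + 1 := congrArg Fin.val hxj
      exact hc hcc
    have hjtop : ((w ⟨((w⁻¹ (mir (⟨0, hz⟩ : Fin (m + 2)))) : ℕ) + 1, hxlt⟩) : ℕ) ≠ m + 1 := by
      intro hct
      have he : w ⟨((w⁻¹ (mir (⟨0, hz⟩ : Fin (m + 2)))) : ℕ) + 1, hxlt⟩
          = mir (⟨0, hz⟩ : Fin (m + 2)) := Fin.ext (by rw [hmir]; exact hct)
      rw [he] at hxj
      have hcc : ((w⁻¹ (mir (⟨0, hz⟩ : Fin (m + 2)))) : ℕ)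
          = ((w⁻¹ (mir (⟨0, hz⟩ : Fin (m + 2)))) : ℕ) + 1 := congrArg Fin.val hxj
      omega
    have hjlt := (w ⟨((w⁻¹ (mir (⟨0, hz⟩ : Fin (m + 2)))) : ℕ) + 1, hxlt⟩).isLt
    refine h2 (w ⟨((w⁻¹ (mir (⟨0, hz⟩ : Fin (m + 2)))) : ℕ) + 1, hxlt⟩)
      (by simpa using (by omega : 0 < ((w ⟨((w⁻¹ (mir (⟨0, hz⟩ : Fin (m + 2)))) : ℕ) + 1, hxlt⟩) : ℕ)))
      (by simpa using (by omega : ((w ⟨((w⁻¹ (mir (⟨0, hz⟩ : Fin (m + 2)))) : ℕ) + 1, hxlt⟩) : ℕ) < m + 2 - 1 - 0)) ?_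
    rw [hxj]
    constructor
    · exact Fin.lt_def.mpr (Nat.lt_succ_self _)
    · refine Fin.lt_def.mpr ?_
      show ((w⁻¹ (mir (⟨0, hz⟩ : Fin (m + 2)))) : ℕ) + 1 < ((w⁻¹ (⟨0, hz⟩ : Fin (m + 2))) : ℕ)
      omega
  refine ⟨((w⁻¹ (mir (⟨0, hz⟩ : Fin (m + 2)))) : ℕ), by omega, ?_, ?_⟩
  · have e : (⟨((w⁻¹ (mir (⟨0, hz⟩ : Fin (m + 2)))) : ℕ), by omega⟩ : Fin (m + 2))
        = w⁻¹ (mir (⟨0, hz⟩ : Fin (m + 2))) := Fin.ext rfl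
    rw [e, perm_apply_inv_self]
    exact Fin.ext hmir
  · have e : (⟨((w⁻¹ (mir (⟨0, hz⟩ : Fin (m + 2)))) : ℕ) + 1, by omega⟩ : Fin (m + 2))
        = w⁻¹ (⟨0, hz⟩ : Fin (m + 2)) := Fin.ext hadj.symm
    rw [e, perm_apply_inv_self]


lemma oneLine_eq {N : ℕ} (u : Perm (Fin N)) :
    oneLine u = (List.range N).map (fun k => Wof u k + 1) := by
  apply List.ext_getElem (by simp [oneLine])
  intro i h1 h2
  have hiN : i < N := by simpa [oneLine] using h1
  simp only [oneLine, List.getElem_ofFn, List.getElem_map, List.getElem_range]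
  unfold Wof
  rw [dif_pos hiN]

lemma Wof_insPerm (k : ℕ) (hk : k < m + 2) :
    Wof (insPerm p w') k = aF m p (Wof w') k := by
  unfold Wof; rw [dif_pos hk]; rfl

lemma oneLine_insPerm :
    oneLine w' = ((oneLine (insPerm p w')).filter
      (fun v => decide (v ≠ 1 ∧ v ≠ (m + 2)))).map (· - 1) := by
  have hp := p.is_le
  rw [oneLine_eq, oneLine_eq]
  have hr1 : List.range ((p : ℕ) + 2) = List.range p ++ [(p : ℕ), (p : ℕ) + 1] := by
    rw [show (p : ℕ) + 2 = ((p : ℕ) + 1) + 1 from rfl, List.range_succ, List.range_succ]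
    simp
  have hr2 : List.range (m + 2) = (List.range p ++ [(p : ℕ), (p : ℕ) + 1])
      ++ (List.range (m - (p : ℕ))).map (fun j => (p : ℕ) + 2 + j) := by
    rw [show m + 2 = ((p : ℕ) + 2) + (m - (p : ℕ)) by omega, List.range_add, hr1]
  have hrm := List.range_add (n := (p : ℕ)) (m := (m - (p : ℕ)))
  rw [show (p : ℕ) + (m - (p : ℕ)) = m by omega] at hrm
  have hFlt : ∀ k, k < (p : ℕ) → Wof (insPerm p w') k = Wof w' k + 1 := by
    intro k hk
    rw [Wof_insPerm p w' k (by omega)]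
    unfold aF; rw [if_pos hk]
  have hFp : Wof (insPerm p w') (p : ℕ) = m + 1 := by
    rw [Wof_insPerm p w' (p : ℕ) (by omega)]
    unfold aF; rw [if_neg (by omega), if_pos rfl]
  have hFp1 : Wof (insPerm p w') ((p : ℕ) + 1) = 0 := by
    rw [Wof_insPerm p w' ((p : ℕ) + 1) (by omega)]
    unfold aF; rw [if_neg (by omega), if_neg (by omega), if_pos rfl]
  have hFge : ∀ j, j < m - (p : ℕ) → Wof (insPerm p w') ((p : ℕ) + 2 + j) = Wof w' ((p : ℕ) + j) + 1 := by
    intro j hj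
    rw [Wof_insPerm p w' ((p : ℕ) + 2 + j) (by omega)]
    unfold aF
    rw [if_neg (by omega), if_neg (by omega), if_neg (by omega),
      show (p : ℕ) + 2 + j - 2 = (p : ℕ) + j by omega]
  rw [hr2, hrm]
  simp only [List.map_append, List.filter_append]
  have hmid : List.filter (fun v => decide (v ≠ 1 ∧ v ≠ (m + 2)))
      (List.map (fun k => Wof (insPerm p w') k + 1) [(p : ℕ), (p : ℕ) + 1]) = [] := by
    simp [hFp, hFp1]
  have hleft : List.filter (fun v => decide (v ≠ 1 ∧ v ≠ (m + 2)))
      (List.map (fun k => Wof (insPerm p w') k + 1) (List.range p)) =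
      List.map (fun k => Wof (insPerm p w') k + 1) (List.range p) := by
    rw [List.filter_eq_self]
    intro x hx
    simp only [List.mem_map, List.mem_range] at hx
    obtain ⟨k, hk, rfl⟩ := hx
    have := Wof_lt w' (show k < m by omega)
    rw [hFlt k hk]
    simp only [decide_eq_true_eq]
    omega
  have hright : List.filter (fun v => decide (v ≠ 1 ∧ v ≠ (m + 2)))
      (List.map (fun k => Wof (insPerm p w') k + 1)
        ((List.range (m - (p : ℕ))).map (fun j => (p : ℕ) + 2 + j))) =
      List.map (fun k => Wof (insPerm p w') k + 1)
        ((List.range (m - (p : ℕ))).map (fun j => (p : ℕ) + 2 + j)) := by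
    rw [List.filter_eq_self]
    intro x hx
    simp only [List.mem_map, List.mem_range] at hx
    obtain ⟨k, ⟨j, hj, rfl⟩, rfl⟩ := hx
    have := Wof_lt w' (show (p : ℕ) + j < m by omega)
    rw [hFge j hj]
    simp only [decide_eq_true_eq]
    omega
  rw [hmid, hleft, hright]
  simp only [List.map_nil, List.append_nil, List.map_append, List.map_map]
  congr 1
  · apply List.map_congr_left
    intro k hk
    rw [List.mem_range] at hk
    simp only [Function.comp_apply]
    rw [hFlt k hk]
    omega
  · apply List.map_congr_left
    intro j hj
    rw [List.mem_range] at hj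
    simp only [Function.comp_apply]
    rw [hFge j hj]
    omega

end DDel

/-- deleting the adjacent pair `n,1` from the one-line notation of `w ∈ D_n`
and decreasing remaining entries by one yields an element of `D_{n-2}`; moreover
`|D_n| = (n-1)|D_{n-2}|`. -/
theorem Dset_deletion (n : ℕ) (hn : 2 ≤ n) :
    (∀ w ∈ Dset n, ∃ w' ∈ Dset (n - 2),
      oneLine w' =
        ((oneLine w).filter (fun v => decide (v ≠ 1 ∧ v ≠ n))).map (· - 1)) ∧
    Set.ncard (Dset n) = (n - 1) * Set.ncard (Dset (n - 2)) := by
  obtain ⟨m, rfl⟩ : ∃ m, n = m + 2 := ⟨n - 2, by omega⟩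
  show (∀ w ∈ Dset (m + 2), ∃ w' ∈ Dset m,
      oneLine w' =
        ((oneLine w).filter (fun v => decide (v ≠ 1 ∧ v ≠ (m + 2)))).map (· - 1)) ∧
    Set.ncard (Dset (m + 2)) = (m + 2 - 1) * Set.ncard (Dset m)
  constructor
  · intro w hw
    obtain ⟨a, h1, hwa, hwb⟩ := DDel.exists_adj hw
    refine ⟨DDel.delPerm h1 hwa hwb, ?_, ?_⟩
    · exact (DDel.mem_iff ⟨a, by omega⟩ (DDel.delPerm h1 hwa hwb)).mp
        (by rw [DDel.ins_del h1 hwa hwb]; exact hw)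
    · have h := DDel.oneLine_insPerm ⟨a, by omega⟩ (DDel.delPerm h1 hwa hwb)
      rw [DDel.ins_del h1 hwa hwb] at h
      exact h
  · have e : ↥(Dset m) × Fin (m + 1) ≃ ↥(Dset (m + 2)) := by
      refine Equiv.ofBijective
        (fun x => ⟨DDel.insPerm x.2 x.1.1, (DDel.mem_iff x.2 x.1.1).mpr x.1.2⟩) ⟨?_, ?_⟩
      · rintro ⟨⟨w1, hw1⟩, p1⟩ ⟨⟨w2, hw2⟩, p2⟩ hx
        have h := DDel.insPerm_inj (congrArg Subtype.val hx)
        simp only [Prod.mk.injEq, Subtype.mk.injEq]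
        exact ⟨h.2, h.1⟩
      · rintro ⟨w, hw⟩
        obtain ⟨a, h1, hwa, hwb⟩ := DDel.exists_adj hw
        refine ⟨⟨⟨DDel.delPerm h1 hwa hwb, ?_⟩, ⟨a, by omega⟩⟩, ?_⟩
        · exact (DDel.mem_iff ⟨a, by omega⟩ _).mp
            (by rw [DDel.ins_del h1 hwa hwb]; exact hw)
        · exact Subtype.ext (DDel.ins_del h1 hwa hwb)
    rw [show m + 2 - 1 = m + 1 by omega,
      ← Nat.card_coe_set_eq (Dset (m + 2)), ← Nat.card_coe_set_eq (Dset m),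
      ← Nat.card_congr e, Nat.card_prod]
    rw [Nat.card_eq_fintype_card (α := Fin (m + 1)), Fintype.card_fin, Nat.mul_comm]
end

section
/- For the Richardson-Springer action on involutions: if π⁻¹(i+1) < π⁻¹(i) then ℓ_(n)(s_i · π) = ℓ_(n)(π), and if π⁻¹(i) < π⁻¹(i+1) then ℓ_(n)(s_i · π) = ℓ_(n)(π) + 1, where ℓ_(n)(π) = (ℓ(π) + exc(π))/2, ℓ is the inversion number, and exc(π) = #{i : π(i) > i}. -/
open Equiv

lemma swap_lt_swap_iff {n : ℕ} (a b u v : Fin n) (hab : (b:ℕ) = (a:ℕ) + 1)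
    (h1 : ¬(u = a ∧ v = b)) (h2 : ¬(u = b ∧ v = a)) :
    Equiv.swap a b u < Equiv.swap a b v ↔ u < v := by
  simp only [Equiv.swap_apply_def]
  split_ifs with e1 e2 e3 e4 e5 e6 e7 e8 <;>
    simp only [Fin.ext_iff, Fin.lt_def, not_and] at * <;> omega

lemma invNum_inv {n : ℕ} (w : Perm (Fin n)) : invNum w⁻¹ = invNum w := by
  unfold invNum
  apply Finset.card_bij' (fun p _ => (w⁻¹ p.2, w⁻¹ p.1)) (fun p _ => (w p.2, w p.1))
  · rintro ⟨p, q⟩ hm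
    simp only [Finset.mem_filter, Finset.mem_univ, true_and] at hm ⊢
    simpa using hm.symm
  · rintro ⟨p, q⟩ hm
    simp only [Finset.mem_filter, Finset.mem_univ, true_and] at hm ⊢
    simpa using hm.symm
  · rintro ⟨p, q⟩ _; simp
  · rintro ⟨p, q⟩ _; simp

lemma invNum_swap_mul {n : ℕ} (a b : Fin n) (hab : (b:ℕ) = (a:ℕ)+1) (w : Perm (Fin n))
    (h : w⁻¹ a < w⁻¹ b) :
    invNum (Equiv.swap a b * w) = invNum w + 1 := by
  have hne : a ≠ b := by intro e; rw [e] at hab; omega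
  have hltab : a < b := by rw [Fin.lt_def]; omega
  unfold invNum
  have key : (Finset.univ.filter (fun p : Fin n × Fin n =>
        p.1 < p.2 ∧ (Equiv.swap a b * w) p.2 < (Equiv.swap a b * w) p.1))
      = insert (w⁻¹ a, w⁻¹ b)
        (Finset.univ.filter (fun p : Fin n × Fin n => p.1 < p.2 ∧ w p.2 < w p.1)) := by
    ext ⟨p, q⟩
    simp only [Finset.mem_insert, Finset.mem_filter, Finset.mem_univ, true_and,
      Prod.mk.injEq]
    simp only [Perm.mul_apply]
    constructor
    · rintro ⟨hpq, hlt⟩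
      by_cases hc1 : w q = a ∧ w p = b
      · exfalso
        have hp' : p = w⁻¹ b := by rw [← hc1.2]; simp
        have hq' : q = w⁻¹ a := by rw [← hc1.1]; simp
        rw [hp', hq'] at hpq
        exact absurd h (not_lt.mpr hpq.le)
      · by_cases hc2 : w q = b ∧ w p = a
        · left
          constructor
          · rw [← hc2.2]; simp
          · rw [← hc2.1]; simp
        · right
          exact ⟨hpq, (swap_lt_swap_iff a b (w q) (w p) hab hc1 hc2).mp hlt⟩
    · rintro (⟨hp, hq⟩ | ⟨hpq, hlt⟩)
      · subst hp; subst hq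
        refine ⟨h, ?_⟩
        simp [Equiv.swap_apply_left, Equiv.swap_apply_right, hltab]
      · refine ⟨hpq, ?_⟩
        have hc1 : ¬(w q = a ∧ w p = b) := by
          rintro ⟨e1, e2⟩
          have hq' : q = w⁻¹ a := by rw [← e1]; simp
          have hp' : p = w⁻¹ b := by rw [← e2]; simp
          rw [hp', hq'] at hpq
          exact absurd hpq (not_lt.mpr h.le)
        have hc2 : ¬(w q = b ∧ w p = a) := by
          rintro ⟨e1, e2⟩
          rw [e1, e2] at hlt
          exact absurd hlt (not_lt.mpr hltab.le)
        exact (swap_lt_swap_iff a b (w q) (w p) hab hc1 hc2).mpr hlt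
  rw [key, Finset.card_insert_of_notMem]
  simp only [Finset.mem_filter, Finset.mem_univ, true_and, not_and]
  intro _
  simp [not_lt, hltab.le]

lemma invNum_mul_swap {n : ℕ} (a b : Fin n) (hab : (b:ℕ) = (a:ℕ)+1) (w : Perm (Fin n))
    (h : w a < w b) :
    invNum (w * Equiv.swap a b) = invNum w + 1 := by
  have e : w * Equiv.swap a b = (Equiv.swap a b * w⁻¹)⁻¹ := by
    rw [mul_inv_rev, inv_inv, Equiv.swap_inv]
  rw [e, invNum_inv, invNum_swap_mul a b hab w⁻¹ (by simpa using h), invNum_inv]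

lemma excNum_swap_mul_fixed {n : ℕ} (a b : Fin n) (hab : (b:ℕ) = (a:ℕ)+1)
    (π : Perm (Fin n)) (ha : π a = a) (hb : π b = b) :
    excNum (Equiv.swap a b * π) = excNum π + 1 := by
  have hltab : a < b := by rw [Fin.lt_def]; omega
  unfold excNum
  have key : (Finset.univ.filter (fun i : Fin n => i < (Equiv.swap a b * π) i))
      = insert a (Finset.univ.filter (fun i : Fin n => i < π i)) := by
    ext x
    simp only [Finset.mem_insert, Finset.mem_filter, Finset.mem_univ, true_and]
    simp only [Perm.mul_apply]
    by_cases hx1 : x = a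
    · subst hx1
      simp [ha, Equiv.swap_apply_left, hltab, not_lt.mpr hltab.le, lt_irrefl]
    · by_cases hx2 : x = b
      · subst hx2
        simp only [hb, Equiv.swap_apply_right, Fin.lt_def, Fin.ext_iff]
        omega
      · have hpa : π x ≠ a := fun e => hx1 (by rw [← ha] at e; exact π.injective e)
        have hpb : π x ≠ b := fun e => hx2 (by rw [← hb] at e; exact π.injective e)
        rw [Equiv.swap_apply_of_ne_of_ne hpa hpb]
        simp [hx1]
  rw [key, Finset.card_insert_of_notMem]
  simp [ha]

lemma excNum_conj {n : ℕ} (a b : Fin n) (hab : (b:ℕ) = (a:ℕ)+1)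
    (π : Perm (Fin n)) (hπ : π * π = 1) (hba : π a ≠ b) :
    excNum (Equiv.swap a b * π * Equiv.swap a b) = excNum π := by
  have hinv : ∀ x, π (π x) = x := fun x => by
    rw [← Perm.mul_apply, hπ]; rfl
  have hab' : π b ≠ a := fun e => hba (by rw [← e, hinv])
  have cond : ∀ x : Fin n, ¬(x = a ∧ π x = b) ∧ ¬(x = b ∧ π x = a) := by
    intro x
    constructor
    · rintro ⟨e1, e2⟩; subst e1; exact hba e2
    · rintro ⟨e1, e2⟩; subst e1; exact hab' e2
  unfold excNum
  apply Finset.card_bij' (fun x _ => Equiv.swap a b x) (fun x _ => Equiv.swap a b x)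
  · intro x hm
    simp only [Finset.mem_filter, Finset.mem_univ, true_and] at hm ⊢
    simp only [Perm.mul_apply, Equiv.swap_apply_self] at hm ⊢
    have := (swap_lt_swap_iff a b (Equiv.swap a b x) (π (Equiv.swap a b x)) hab
      (cond _).1 (cond _).2).mp (by simpa using hm)
    exact this
  · intro x hm
    simp only [Finset.mem_filter, Finset.mem_univ, true_and] at hm ⊢
    simp only [Perm.mul_apply, Equiv.swap_apply_self] at hm ⊢
    exact (swap_lt_swap_iff a b x (π x) hab (cond x).1 (cond x).2).mpr hm
  · intro x _; simp
  · intro x _; simp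


/-- effect of the Richardson–Springer action on the rank function `ℓ_(n)`. -/
theorem rsStep_invLen (n i : ℕ) (hi : i + 1 < n) (π : Perm (Fin n)) (hπ : π * π = 1) :
    (π⁻¹ ⟨i + 1, hi⟩ < π⁻¹ ⟨i, Nat.lt_of_succ_lt hi⟩ → invLen (rsStep i π) = invLen π) ∧
    (π⁻¹ ⟨i, Nat.lt_of_succ_lt hi⟩ < π⁻¹ ⟨i + 1, hi⟩ →
      invLen (rsStep i π) = invLen π + 1) := by
  set a : Fin n := ⟨i, Nat.lt_of_succ_lt hi⟩ with ha_def
  set b : Fin n := ⟨i + 1, hi⟩ with hb_def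
  have hab : (b:ℕ) = (a:ℕ) + 1 := rfl
  have hinvπ : π⁻¹ = π := inv_eq_of_mul_eq_one_right hπ
  have happ : ∀ x, π (π x) = x := fun x => by rw [← Perm.mul_apply, hπ]; rfl
  constructor
  · intro h
    have hrs : rsStep i π = π := by
      unfold rsStep
      rw [dif_pos hi]
      simp only []
      rw [if_pos h]
    rw [hrs]
  · intro h
    have hnot : ¬ (π⁻¹ b < π⁻¹ a) := not_lt.mpr h.le
    have hπab : π a < π b := by rw [hinvπ] at h; exact h
    by_cases hfix : π a = a ∧ π b = b
    · have hrs : rsStep i π = Equiv.swap a b * π := by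
        unfold rsStep
        rw [dif_pos hi]
        simp only []
        rw [if_neg hnot, if_pos hfix]
      rw [hrs]
      unfold invLen
      rw [invNum_swap_mul a b hab π h, excNum_swap_mul_fixed a b hab π hfix.1 hfix.2]
      omega
    · have hrs : rsStep i π = Equiv.swap a b * π * Equiv.swap a b := by
        unfold rsStep
        rw [dif_pos hi]
        simp only []
        rw [if_neg hnot, if_neg hfix]
      rw [hrs]
      have hba : π a ≠ b := by
        intro e
        have e2 : π b = a := by rw [← e, happ]
        rw [e, e2] at hπab
        exact absurd hπab (by rw [Fin.lt_def]; omega)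
      have c2 : ¬(π a = b ∧ π b = a) := fun ⟨e1, _⟩ => hba e1
      have hlt2 : (π * Equiv.swap a b)⁻¹ a < (π * Equiv.swap a b)⁻¹ b := by
        simp only [mul_inv_rev, Equiv.swap_inv, Perm.mul_apply, hinvπ]
        exact (swap_lt_swap_iff a b (π a) (π b) hab hfix c2).mpr hπab
      have e1 : invNum (Equiv.swap a b * π * Equiv.swap a b) = invNum π + 2 := by
        rw [mul_assoc, invNum_swap_mul a b hab (π * Equiv.swap a b) hlt2,
          invNum_mul_swap a b hab π hπab]
      have e2 : excNum (Equiv.swap a b * π * Equiv.swap a b) = excNum π :=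
        excNum_conj a b hab π hπ hba
      unfold invLen
      rw [e1, e2]
      omega
end

section
/- Let 1 ≤ j < i ≤ n with i = j+1, and let v = (s_{n-1} s_{n-2} ⋯ s_{j+1})(s_1 s_2 ⋯ s_{i-1}) acting on the identity involution e via the Richardson-Springer action. Then v · e is the transposition (1,n) and ℓ_(n)(v · e) = ℓ(v). -/
open Equiv

lemma swap_val' {n : ℕ} (a b : ℕ) (ha : a < n) (hb : b < n) (x : Fin n) :
    ((Equiv.swap ⟨a, ha⟩ ⟨b, hb⟩ : Perm (Fin n)) x : ℕ) =
      if (x : ℕ) = a then b else if (x : ℕ) = b then a else x := by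
  rw [Equiv.swap_apply_def]
  split_ifs with h1 h2 h3 h4 h5 h6 <;> simp_all [Fin.ext_iff]

lemma rsStep_swap1 {n : ℕ} (m k : ℕ) (h : m + 1 + k < n) :
    rsStep m (Equiv.swap ⟨m + 1, by omega⟩ ⟨m + 1 + k, h⟩) =
      Equiv.swap ⟨m, by omega⟩ ⟨m + 1 + k, h⟩ := by
  simp only [rsStep]
  split_ifs with h0 h1 h2
  · exfalso
    simp only [Equiv.swap_inv, Fin.lt_def, swap_val', Fin.val_mk] at h1
    split_ifs at h1 <;> omega
  · rcases h2 with ⟨ha, hb⟩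
    have hb' := congrArg Fin.val hb
    rw [swap_val'] at hb'
    simp only [Fin.val_mk] at hb'
    have hk : k = 0 := by split_ifs at hb' <;> omega
    subst hk
    ext x
    simp only [Perm.mul_apply, swap_val', Fin.val_mk]
    split_ifs <;> omega
  · have hk : k ≠ 0 := by
      rintro rfl
      apply h2
      refine ⟨Fin.ext ?_, Fin.ext ?_⟩ <;>
        · rw [swap_val']
          simp only [Fin.val_mk]
          split_ifs <;> omega
    ext x
    simp only [Perm.mul_apply, swap_val', Fin.val_mk]
    have := x.isLt
    split_ifs <;> first | exact (‹False›).elim | omega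
  · omega

lemma rsStep_swap2 {n : ℕ} (t : ℕ) (ht : 1 ≤ t) (h : t + 1 < n) :
    rsStep t (Equiv.swap ⟨0, by omega⟩ ⟨t, by omega⟩) =
      Equiv.swap ⟨0, by omega⟩ ⟨t + 1, h⟩ := by
  simp only [rsStep]
  split_ifs with h0 h1
  · exfalso
    simp only [Equiv.swap_inv, Fin.lt_def, swap_val', Fin.val_mk] at h0
    split_ifs at h0 <;> omega
  · exfalso
    rcases h1 with ⟨ha, hb⟩
    have ha' := congrArg Fin.val ha
    rw [swap_val'] at ha'
    simp only [Fin.val_mk] at ha'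
    split_ifs at ha' <;> omega
  · ext x
    simp only [Perm.mul_apply, swap_val', Fin.val_mk]
    have := x.isLt
    split_ifs <;> first | exact (‹False›).elim | omega

lemma rs_range {n : ℕ} : ∀ (k m : ℕ) (h : m + k < n),
    rsWord (List.range' m k) (1 : Perm (Fin n)) =
      Equiv.swap ⟨m, by omega⟩ ⟨m + k, h⟩
  | 0, m, h => by
    simp only [List.range', rsWord, List.foldr_nil]
    rw [show (⟨m + 0, h⟩ : Fin n) = ⟨m, by omega⟩ from Fin.ext (by simp),
      Equiv.swap_self]
    rfl
  | k + 1, m, h => by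
    rw [List.range'_succ]
    show rsStep m (rsWord (List.range' (m+1) k) (1 : Perm (Fin n))) = _
    rw [rs_range k (m+1) (by omega), rsStep_swap1 m k (by omega)]
    congr 1
    exact Fin.ext (by simp; omega)

lemma rs_prefix {n : ℕ} (j : ℕ) (hj : 1 ≤ j) :
    ∀ (m : ℕ) (h : j + m < n),
    rsWord ((List.range' j m).reverse) (Equiv.swap ⟨0, by omega⟩ ⟨j, by omega⟩) =
      Equiv.swap ⟨0, by omega⟩ ⟨j + m, h⟩
  | 0, h => by
    simp only [List.range', List.reverse_nil, rsWord, List.foldr_nil]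
    congr 1
    all_goals exact Fin.ext (by simp only [Fin.val_mk]; omega)
  | m + 1, h => by
    rw [List.range'_concat, one_mul, List.reverse_append, List.reverse_singleton,
      List.singleton_append]
    show rsStep (j + m) (rsWord ((List.range' j m).reverse) _) = _
    rw [rs_prefix j hj m (by omega), rsStep_swap2 (j + m) (by omega) (by omega)]
    congr 1
    all_goals exact Fin.ext (by simp only [Fin.val_mk]; omega)

lemma adjSwap_eq {n : ℕ} (i : ℕ) (h : i + 1 < n) :
    adjSwap n i = Equiv.swap ⟨i, by omega⟩ ⟨i + 1, h⟩ := by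
  rw [adjSwap, dif_pos h]

lemma prodB {n : ℕ} : ∀ (k : ℕ), k < n → ∀ x : Fin n,
    ((((List.range k).map (adjSwap n)).prod) x : ℕ) =
      if (x : ℕ) < k then (x : ℕ) + 1 else if (x : ℕ) = k then 0 else (x : ℕ)
  | 0, hk, x => by
    simp only [List.range_zero, List.map_nil, List.prod_nil, Perm.one_apply]
    have := x.isLt
    split_ifs <;> omega
  | k + 1, hk, x => by
    rw [List.range_succ, List.map_append, List.prod_append, List.map_singleton,
      List.prod_singleton, Perm.mul_apply, prodB k (by omega),
      adjSwap_eq k hk, swap_val', Fin.val_mk]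
    have := x.isLt
    split_ifs <;> omega

lemma prodA {n : ℕ} (j : ℕ) : ∀ (m : ℕ), j + m < n → ∀ x : Fin n,
    ((((List.range' j m).reverse.map (adjSwap n)).prod) x : ℕ) =
      if (x : ℕ) = j then j + m
      else if j < (x : ℕ) ∧ (x : ℕ) ≤ j + m then (x : ℕ) - 1 else (x : ℕ)
  | 0, hm, x => by
    simp only [List.range', List.reverse_nil, List.map_nil, List.prod_nil,
      Perm.one_apply]
    have := x.isLt
    split_ifs <;> omega
  | m + 1, hm, x => by
    rw [List.range'_concat, one_mul, List.reverse_append, List.reverse_singleton,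
      List.singleton_append, List.map_cons, List.prod_cons, Perm.mul_apply,
      adjSwap_eq (j + m) (by omega), swap_val', prodA j m (by omega), Fin.val_mk]
    have := x.isLt
    split_ifs <;> omega

lemma count_prod {n j : ℕ} (hj : 1 ≤ j) (hjn : j + 1 ≤ n) (w : Perm (Fin n))
    (hw : ∀ x : Fin n, (w x : ℕ) =
      if (x : ℕ) < j - 1 then (x : ℕ) + 1
      else if (x : ℕ) = j - 1 then n - 1
      else if (x : ℕ) = j then 0 else (x : ℕ) - 1) :
    invNum w = n - 1 := by
  rw [invNum]
  refine Finset.card_eq_of_bijective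
    (fun i hi => if i < j then (⟨i, by omega⟩, ⟨j, by omega⟩)
      else (⟨j - 1, by omega⟩, ⟨i + 1, by omega⟩)) ?_ ?_ ?_
  · intro a ha
    simp only [Finset.mem_filter, Finset.mem_univ, true_and, Fin.lt_def] at ha
    obtain ⟨hlt, hinv⟩ := ha
    rw [hw, hw] at hinv
    have h1 := a.1.isLt
    have h2 := a.2.isLt
    have key : ((a.2 : ℕ) = j ∧ (a.1 : ℕ) < j) ∨ ((a.1 : ℕ) = j - 1 ∧ j < (a.2 : ℕ)) := by
      split_ifs at hinv <;> omega
    rcases key with ⟨hq, hp⟩ | ⟨hp, hq⟩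
    · refine ⟨(a.1 : ℕ), by omega, ?_⟩
      beta_reduce
      rw [if_pos hp]
      exact Prod.ext_iff.mpr ⟨Fin.ext rfl, Fin.ext hq.symm⟩
    · refine ⟨(a.2 : ℕ) - 1, by omega, ?_⟩
      beta_reduce
      rw [if_neg (by omega)]
      exact Prod.ext_iff.mpr ⟨Fin.ext (by simp only [Fin.val_mk]; omega),
        Fin.ext (by simp only [Fin.val_mk]; omega)⟩
  · intro i hi
    simp only [Finset.mem_filter, Finset.mem_univ, true_and]
    by_cases hij : i < j
    · rw [if_pos hij]
      refine ⟨Fin.lt_def.mpr (by simp only [Fin.val_mk]; omega), ?_⟩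
      rw [Fin.lt_def, hw, hw]
      simp only [Fin.val_mk]
      split_ifs <;> first | exact (‹False›).elim | omega
    · rw [if_neg hij]
      refine ⟨Fin.lt_def.mpr (by simp only [Fin.val_mk]; omega), ?_⟩
      rw [Fin.lt_def, hw, hw]
      simp only [Fin.val_mk]
      split_ifs <;> first | exact (‹False›).elim | omega
  · intro i i' hi hi' heq
    beta_reduce at heq
    split_ifs at heq with h h' h' <;>
      simp only [Prod.ext_iff, Fin.ext_iff, Fin.val_mk] at heq <;> omega

lemma count_swap {n : ℕ} (hn : 2 ≤ n) :
    invNum (Equiv.swap (⟨0, by omega⟩ : Fin n) ⟨n - 1, by omega⟩) = 2 * n - 3 := by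
  rw [invNum]
  refine Finset.card_eq_of_bijective
    (fun i hi => if h : i < n - 1 then (⟨0, by omega⟩, ⟨i + 1, by omega⟩)
      else (⟨i + 2 - n, by omega⟩, ⟨n - 1, by omega⟩)) ?_ ?_ ?_
  · intro a ha
    simp only [Finset.mem_filter, Finset.mem_univ, true_and, Fin.lt_def] at ha
    obtain ⟨hlt, hinv⟩ := ha
    rw [swap_val', swap_val'] at hinv
    have h1 := a.1.isLt
    have h2 := a.2.isLt
    have key : ((a.1 : ℕ) = 0 ∧ 0 < (a.2 : ℕ)) ∨ (0 < (a.1 : ℕ) ∧ (a.2 : ℕ) = n - 1) := by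
      split_ifs at hinv <;> omega
    rcases key with ⟨hp, hq⟩ | ⟨hp, hq⟩
    · refine ⟨(a.2 : ℕ) - 1, by omega, ?_⟩
      beta_reduce
      rw [dif_pos (by omega : (a.2 : ℕ) - 1 < n - 1)]
      exact Prod.ext_iff.mpr ⟨Fin.ext (by simp only [Fin.val_mk]; omega),
        Fin.ext (by simp only [Fin.val_mk]; omega)⟩
    · refine ⟨n - 2 + (a.1 : ℕ), by omega, ?_⟩
      beta_reduce
      rw [dif_neg (by omega : ¬ n - 2 + (a.1 : ℕ) < n - 1)]
      exact Prod.ext_iff.mpr ⟨Fin.ext (by simp only [Fin.val_mk]; omega),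
        Fin.ext (by simp only [Fin.val_mk]; omega)⟩
  · intro i hi
    simp only [Finset.mem_filter, Finset.mem_univ, true_and]
    by_cases hin : i < n - 1
    · rw [dif_pos hin]
      refine ⟨Fin.lt_def.mpr (by simp only [Fin.val_mk]; omega), ?_⟩
      rw [Fin.lt_def, swap_val', swap_val']
      simp only [Fin.val_mk]
      split_ifs <;> first | exact (‹False›).elim | omega
    · rw [dif_neg hin]
      refine ⟨Fin.lt_def.mpr (by simp only [Fin.val_mk]; omega), ?_⟩
      rw [Fin.lt_def, swap_val', swap_val']
      simp only [Fin.val_mk]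
      split_ifs <;> first | exact (‹False›).elim | omega
  · intro i i' hi hi' heq
    beta_reduce at heq
    split_ifs at heq with h h' h' <;>
      simp only [Prod.ext_iff, Fin.ext_iff, Fin.val_mk] at heq <;> omega

lemma exc_swap {n : ℕ} (hn : 2 ≤ n) :
    excNum (Equiv.swap (⟨0, by omega⟩ : Fin n) ⟨n - 1, by omega⟩) = 1 := by
  rw [excNum]
  rw [show Finset.univ.filter (fun i : Fin n =>
      i < Equiv.swap (⟨0, by omega⟩ : Fin n) ⟨n - 1, by omega⟩ i) = {⟨0, by omega⟩} from ?_]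
  · exact Finset.card_singleton _
  · ext a
    have := a.isLt
    simp only [Finset.mem_filter, Finset.mem_univ, true_and, Finset.mem_singleton,
      Fin.lt_def, swap_val', Fin.ext_iff, Fin.val_mk]
    split_ifs <;> omega

/-- for `1 ≤ j < i ≤ n` with `i = j+1` and
`v = (s_{n-1}⋯s_{j+1})(s_1⋯s_{i-1})`, one has `v · e = (1,n)` and `ℓ_(n)(v·e) = ℓ(v)`. -/
theorem rsWord_case_adjacent (n i j : ℕ) (h1 : 1 ≤ j) (h2 : j < i) (h3 : i ≤ n)
    (h4 : i = j + 1) :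
    rsWord ((List.range' j (n - 1 - j)).reverse ++ List.range (i - 1)) (1 : Perm (Fin n))
      = Equiv.swap ⟨0, by omega⟩ ⟨n - 1, by omega⟩ ∧
    invLen (rsWord ((List.range' j (n - 1 - j)).reverse ++ List.range (i - 1))
        (1 : Perm (Fin n)))
      = invNum ((((List.range' j (n - 1 - j)).reverse ++ List.range (i - 1)).map
          (adjSwap n)).prod) := by
  have hn : 2 ≤ n := by omega
  have hj1 : i - 1 = j := by omega
  rw [hj1]
  have hBkey : rsWord (List.range j) (1 : Perm (Fin n))
      = Equiv.swap ⟨0, by omega⟩ ⟨j, by omega⟩ := by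
    rw [List.range_eq_range', rs_range j 0 (by omega)]
    congr 1
    exact Fin.ext (by simp only [Fin.val_mk]; omega)
  have hA : rsWord ((List.range' j (n - 1 - j)).reverse ++ List.range j) (1 : Perm (Fin n))
      = Equiv.swap ⟨0, by omega⟩ ⟨n - 1, by omega⟩ := by
    rw [rsWord, List.foldr_append]
    show rsWord ((List.range' j (n - 1 - j)).reverse) (rsWord (List.range j) 1) = _
    rw [hBkey, rs_prefix j h1 (n - 1 - j) (by omega)]
    congr 1
    exact Fin.ext (by simp only [Fin.val_mk]; omega)
  refine ⟨hA, ?_⟩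
  rw [hA]
  have hw : ∀ x : Fin n,
      (((((List.range' j (n - 1 - j)).reverse ++ List.range j).map (adjSwap n)).prod) x : ℕ) =
      if (x : ℕ) < j - 1 then (x : ℕ) + 1
      else if (x : ℕ) = j - 1 then n - 1
      else if (x : ℕ) = j then 0 else (x : ℕ) - 1 := by
    intro x
    rw [List.map_append, List.prod_append, Perm.mul_apply,
      prodA j (n - 1 - j) (by omega), prodB j (by omega)]
    have := x.isLt
    split_ifs <;> omega
  rw [count_prod h1 (by omega) _ hw, invLen, count_swap hn, exc_swap hn]
  omega
end

section
/- Let 1 ≤ i < j ≤ n and v = (s_{n-1} s_{n-2} ⋯ s_j)(s_1 s_2 ⋯ s_{i-1}). Then under the Richardson-Springer action, v · e = (1,i)(j,n) and ℓ_(n)(v · e) = ℓ(v). -/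
open Equiv

open Equiv

lemma rsStep_eq {n : ℕ} (i : ℕ) (h : i + 1 < n) (π : Perm (Fin n)) :
    rsStep i π =
      if π⁻¹ ⟨i+1, h⟩ < π⁻¹ ⟨i, by omega⟩ then π
      else if π ⟨i, by omega⟩ = ⟨i, by omega⟩ ∧ π ⟨i+1, h⟩ = ⟨i+1, h⟩ then
        Equiv.swap ⟨i, by omega⟩ ⟨i+1, h⟩ * π
      else Equiv.swap ⟨i, by omega⟩ ⟨i+1, h⟩ * π * Equiv.swap ⟨i, by omega⟩ ⟨i+1, h⟩ := by
  simp only [rsStep, dif_pos h]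

lemma stepA {n : ℕ} (m b : ℕ) (hb : b < n) (hmb : m + 1 ≤ b) :
    rsStep m (Equiv.swap ⟨m+1, by omega⟩ ⟨b, hb⟩) = Equiv.swap ⟨m, by omega⟩ ⟨b, hb⟩ := by
  have h : m + 1 < n := by omega
  rw [rsStep_eq m h]
  have e1 : (Equiv.swap (⟨m+1, h⟩ : Fin n) ⟨b, hb⟩)⁻¹ ⟨m+1, h⟩ = ⟨b, hb⟩ := by
    rw [Equiv.swap_inv]; exact Equiv.swap_apply_left _ _
  have e2 : (Equiv.swap (⟨m+1, h⟩ : Fin n) ⟨b, hb⟩)⁻¹ ⟨m, by omega⟩ = ⟨m, by omega⟩ := by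
    rw [Equiv.swap_inv]
    exact Equiv.swap_apply_of_ne_of_ne (by simp only [ne_eq, Fin.mk.injEq]; omega)
      (by simp only [ne_eq, Fin.mk.injEq]; omega)
  rw [if_neg (by rw [e1, e2]; simp only [Fin.mk_lt_mk, not_lt]; omega)]
  have e3 : (Equiv.swap (⟨m+1, h⟩ : Fin n) ⟨b, hb⟩) ⟨m, by omega⟩ = ⟨m, by omega⟩ :=
    Equiv.swap_apply_of_ne_of_ne (by simp only [ne_eq, Fin.mk.injEq]; omega)
      (by simp only [ne_eq, Fin.mk.injEq]; omega)
  have e4 : (Equiv.swap (⟨m+1, h⟩ : Fin n) ⟨b, hb⟩) ⟨m+1, h⟩ = ⟨b, hb⟩ :=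
    Equiv.swap_apply_left _ _
  by_cases hcase : b = m + 1
  · subst hcase
    rw [if_pos ⟨e3, e4⟩]
    ext x
    simp only [Perm.mul_apply, Equiv.swap_apply_def, Fin.ext_iff, apply_ite Fin.val]
    split_ifs <;> omega
  · rw [if_neg (by
      rintro ⟨-, hco⟩
      rw [e4, Fin.mk.injEq] at hco
      omega)]
    ext x
    simp only [Perm.mul_apply, Equiv.swap_apply_def, Fin.ext_iff, apply_ite Fin.val]
    split_ifs <;> omega

lemma lemA {n : ℕ} (b : ℕ) (hb : b < n) :
    ∀ m (hm : m ≤ b), rsWord (List.range m) (Equiv.swap ⟨m, by omega⟩ ⟨b, hb⟩)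
      = Equiv.swap ⟨0, by omega⟩ ⟨b, hb⟩ := by
  intro m
  induction m with
  | zero => intro _; rfl
  | succ m ih =>
    intro hm
    rw [List.range_succ, rsWord, List.foldr_append]
    have : List.foldr rsStep (Equiv.swap ⟨m+1, by omega⟩ ⟨b, hb⟩) [m]
        = Equiv.swap ⟨m, by omega⟩ ⟨b, hb⟩ := by
      simp only [List.foldr_cons, List.foldr_nil]
      exact stepA m b hb hm
    rw [this]
    exact ih (by omega)

lemma stepB {n : ℕ} (I J a : ℕ) (hIJ : I < J) (hJa : J ≤ a) (ha : a + 1 < n) :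
    rsStep a (Equiv.swap ⟨J, by omega⟩ ⟨a, by omega⟩ * Equiv.swap ⟨0, by omega⟩ ⟨I, by omega⟩)
      = Equiv.swap ⟨J, by omega⟩ ⟨a+1, ha⟩ * Equiv.swap ⟨0, by omega⟩ ⟨I, by omega⟩ := by
  have hJn : J < n := by omega
  have hIn : I < n := by omega
  have h0n : 0 < n := by omega
  have han : a < n := by omega
  set σ : Perm (Fin n) := Equiv.swap ⟨0, h0n⟩ ⟨I, hIn⟩ with hσ
  set τ : Perm (Fin n) := Equiv.swap ⟨J, hJn⟩ ⟨a, han⟩ with hτ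
  rw [rsStep_eq a ha]
  have e1 : (τ * σ)⁻¹ ⟨a+1, ha⟩ = ⟨a+1, ha⟩ := by
    rw [mul_inv_rev, hσ, hτ, Equiv.swap_inv, Equiv.swap_inv]
    simp only [Perm.mul_apply, Equiv.swap_apply_def]
    split_ifs <;> simp_all [Fin.ext_iff] <;> omega
  have e2 : (τ * σ)⁻¹ ⟨a, han⟩ = ⟨J, hJn⟩ := by
    rw [mul_inv_rev, hσ, hτ, Equiv.swap_inv, Equiv.swap_inv]
    simp only [Perm.mul_apply, Equiv.swap_apply_def]
    split_ifs <;> simp_all [Fin.ext_iff] <;> omega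
  rw [if_neg (by rw [e1, e2]; simp only [Fin.mk_lt_mk, not_lt]; omega)]
  by_cases hcase : J = a
  · have ea : (τ * σ) ⟨a, han⟩ = ⟨a, han⟩ := by
      rw [hσ, hτ]
      simp only [Perm.mul_apply, Equiv.swap_apply_def]
      split_ifs <;> simp_all [Fin.ext_iff] <;> omega
    have eb : (τ * σ) ⟨a+1, ha⟩ = ⟨a+1, ha⟩ := by
      rw [hσ, hτ]
      simp only [Perm.mul_apply, Equiv.swap_apply_def]
      split_ifs <;> simp_all [Fin.ext_iff] <;> omega
    rw [if_pos ⟨ea, eb⟩, hσ, hτ]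
    ext x
    simp only [Perm.mul_apply, Equiv.swap_apply_def, Fin.ext_iff, apply_ite Fin.val]
    split_ifs <;> omega
  · rw [if_neg (by
      rintro ⟨hco, -⟩
      rw [hσ, hτ] at hco
      simp only [Perm.mul_apply, Equiv.swap_apply_def] at hco
      split_ifs at hco <;> simp_all [Fin.ext_iff] <;> omega)]
    have hJa' : J < a := by omega
    set τ' : Perm (Fin n) := Equiv.swap ⟨a, han⟩ ⟨a+1, ha⟩ with hτ'
    have hinv : τ'⁻¹ = τ' := by rw [hτ', Equiv.swap_inv]
    have k1 : τ' * τ * τ'⁻¹ = Equiv.swap ⟨J, hJn⟩ ⟨a+1, ha⟩ := by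
      rw [hτ', hτ, ← Equiv.swap_apply_apply]
      congr 1
      · exact Equiv.swap_apply_of_ne_of_ne (by simp only [ne_eq, Fin.mk.injEq]; omega)
          (by simp only [ne_eq, Fin.mk.injEq]; omega)
      · exact Equiv.swap_apply_left _ _
    have k2 : τ' * σ * τ'⁻¹ = σ := by
      rw [hτ', hσ, ← Equiv.swap_apply_apply]
      congr 1
      · exact Equiv.swap_apply_of_ne_of_ne (by simp only [ne_eq, Fin.mk.injEq]; omega)
          (by simp only [ne_eq, Fin.mk.injEq]; omega)
      · exact Equiv.swap_apply_of_ne_of_ne (by simp only [ne_eq, Fin.mk.injEq]; omega)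
          (by simp only [ne_eq, Fin.mk.injEq]; omega)
    calc τ' * (τ * σ) * τ' = τ' * (τ * σ) * τ'⁻¹ := by rw [hinv]
    _ = (τ' * τ * τ'⁻¹) * (τ' * σ * τ'⁻¹) := by group
    _ = Equiv.swap ⟨J, hJn⟩ ⟨a+1, ha⟩ * σ := by rw [k1, k2]

lemma lemB {n : ℕ} (I J : ℕ) (hIJ : I < J) :
    ∀ t a (hJa : J ≤ a) (htn : a + t ≤ n - 1) (hn : 0 < n),
      List.foldl (fun π k => rsStep k π)
          (Equiv.swap (⟨J, by omega⟩ : Fin n) ⟨a, by omega⟩ *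
            Equiv.swap (⟨0, by omega⟩ : Fin n) ⟨I, by omega⟩)
          (List.range' a t)
        = Equiv.swap (⟨J, by omega⟩ : Fin n) ⟨a+t, by omega⟩ *
            Equiv.swap (⟨0, by omega⟩ : Fin n) ⟨I, by omega⟩ := by
  intro t
  induction t with
  | zero =>
    intro a _ _ _
    rw [show List.range' a 0 = [] from rfl, List.foldl_nil]
    ext x
    simp only [Perm.mul_apply, Equiv.swap_apply_def, Fin.ext_iff, apply_ite Fin.val]
    split_ifs <;> omega
  | succ t ih =>
    intro a hJa htn hn
    rw [List.range'_succ, List.foldl_cons]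
    have ha : a + 1 < n := by omega
    rw [stepB I J a hIJ hJa ha]
    have := ih (a+1) (by omega) (by omega) hn
    rw [this]
    ext x
    simp only [Perm.mul_apply, Equiv.swap_apply_def, Fin.ext_iff, apply_ite Fin.val]
    rw [show a + 1 + t = a + (t + 1) by omega]

lemma prodD {n : ℕ} : ∀ m, m < n → ∀ x : Fin n,
    ((((List.range m).map (adjSwap n)).prod) x : ℕ)
      = if (x:ℕ) < m then (x:ℕ) + 1 else if (x:ℕ) = m then 0 else (x:ℕ) := by
  intro m
  induction m with
  | zero =>
    intro _ x
    simp only [List.range_zero, List.map_nil, List.prod_nil, Perm.coe_one, id_eq]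
    split_ifs <;> omega
  | succ m ih =>
    intro h x
    rw [List.range_succ, List.map_append, List.prod_append]
    simp only [List.map_cons, List.map_nil, List.prod_cons, List.prod_nil, mul_one,
      Perm.mul_apply]
    rw [adjSwap, dif_pos h, ih (by omega)]
    simp only [Equiv.swap_apply_def, apply_ite Fin.val, Fin.ext_iff]
    split_ifs <;> omega

lemma prodC {n J : ℕ} : ∀ t, J + t < n → ∀ x : Fin n,
    (((((List.range' J t).reverse).map (adjSwap n)).prod) x : ℕ)
      = if (x:ℕ) = J then J + t
        else if J < (x:ℕ) ∧ (x:ℕ) ≤ J + t then (x:ℕ) - 1 else (x:ℕ) := by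
  intro t
  induction t with
  | zero =>
    intro _ x
    simp only [List.range'_zero, List.reverse_nil, List.map_nil, List.prod_nil,
      Perm.coe_one, id_eq]
    split_ifs <;> omega
  | succ t ih =>
    intro h x
    rw [List.range'_concat]
    simp only [Nat.one_mul, List.reverse_append, List.reverse_cons, List.reverse_nil,
      List.nil_append, List.singleton_append, List.map_cons, List.prod_cons, Perm.mul_apply]
    rw [adjSwap, dif_pos (by omega : J + t + 1 < n)]
    simp only [Equiv.swap_apply_def, apply_ite Fin.val, Fin.ext_iff]
    rw [ih (by omega)]
    split_ifs <;> omega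

lemma countP {n I J : ℕ} (hIJ : I < J) (hJn : J < n) (w : Perm (Fin n))
    (hw : ∀ x : Fin n, (w x : ℕ)
      = if (x:ℕ) < I then (x:ℕ) + 1 else if (x:ℕ) = I then 0
        else if (x:ℕ) = J then n - 1 else if J < (x:ℕ) then (x:ℕ) - 1 else (x:ℕ)) :
    invNum w = I + (n - 1 - J) := by
  have hIn : I < n := by omega
  have hiff : ∀ p : Fin n × Fin n, (p.1 < p.2 ∧ w p.2 < w p.1)
      ↔ (((p.2 : ℕ) = I ∧ (p.1 : ℕ) < I) ∨ ((p.1 : ℕ) = J ∧ J < (p.2 : ℕ))) := by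
    intro p
    have h1 := p.1.isLt
    have h2 := p.2.isLt
    rw [Fin.lt_def, Fin.lt_def, hw p.1, hw p.2]
    constructor
    · rintro ⟨hlt, hvw⟩
      split_ifs at hvw <;> omega
    · intro hor
      refine ⟨by omega, by split_ifs <;> omega⟩
  have hset : Finset.univ.filter (fun p : Fin n × Fin n => p.1 < p.2 ∧ w p.2 < w p.1)
      = ((Finset.Iio (⟨I, hIn⟩ : Fin n)).image fun x => (x, (⟨I, hIn⟩ : Fin n)))
        ∪ ((Finset.Ioi (⟨J, hJn⟩ : Fin n)).image fun y => ((⟨J, hJn⟩ : Fin n), y)) := by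
    ext p
    simp only [Finset.mem_filter, Finset.mem_univ, true_and, Finset.mem_union,
      Finset.mem_image, Finset.mem_Iio, Finset.mem_Ioi, hiff p]
    constructor
    · rintro (⟨h2, h1⟩ | ⟨h1, h2⟩)
      · exact Or.inl ⟨p.1, by rw [Fin.lt_def]; exact h1, by
          rw [Prod.ext_iff]; exact ⟨rfl, Fin.ext h2.symm⟩⟩
      · exact Or.inr ⟨p.2, by rw [Fin.lt_def]; exact h2, by
          rw [Prod.ext_iff]; exact ⟨Fin.ext h1.symm, rfl⟩⟩
    · rintro (⟨x, hx, rfl⟩ | ⟨y, hy, rfl⟩)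
      · exact Or.inl ⟨rfl, by rw [Fin.lt_def] at hx; exact hx⟩
      · exact Or.inr ⟨rfl, by rw [Fin.lt_def] at hy; exact hy⟩
  rw [invNum, hset, Finset.card_union_of_disjoint, Finset.card_image_of_injective,
    Finset.card_image_of_injective, Fin.card_Iio, Fin.card_Ioi]
  · intro a b hab
    simpa using congrArg Prod.snd hab
  · intro a b hab
    simpa using congrArg Prod.fst hab
  · simp only [Finset.disjoint_left, Finset.mem_image, Finset.mem_Iio, Finset.mem_Ioi]
    rintro p ⟨x, hx, rfl⟩ ⟨y, hy, hyp⟩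
    rw [Prod.ext_iff] at hyp
    have e1 : J = (x : ℕ) := congrArg Fin.val hyp.1
    have e2 : (x : ℕ) < I := hx
    omega

lemma countR_inv {n I J : ℕ} (hIJ : I < J) (hJn : J < n) (w : Perm (Fin n))
    (hw : ∀ x : Fin n, (w x : ℕ)
      = if (x:ℕ) = 0 then I else if (x:ℕ) = I then 0
        else if (x:ℕ) = J then n - 1 else if (x:ℕ) = n - 1 then J else (x:ℕ)) :
    invNum w = I + (I - 1) + (n - 1 - J) + (n - 1 - J - 1) := by
  have hIn : I < n := by omega
  have h0n : 0 < n := by omega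
  have hLn : n - 1 < n := by omega
  have hiff : ∀ p : Fin n × Fin n, (p.1 < p.2 ∧ w p.2 < w p.1)
      ↔ (((p.1 : ℕ) = 0 ∧ 0 < (p.2 : ℕ) ∧ (p.2 : ℕ) ≤ I)
        ∨ (0 < (p.1 : ℕ) ∧ (p.1 : ℕ) < I ∧ (p.2 : ℕ) = I)
        ∨ ((p.1 : ℕ) = J ∧ J < (p.2 : ℕ))
        ∨ (J < (p.1 : ℕ) ∧ (p.1 : ℕ) < n - 1 ∧ (p.2 : ℕ) = n - 1)) := by
    intro p
    have h1 := p.1.isLt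
    have h2 := p.2.isLt
    rw [Fin.lt_def, Fin.lt_def, hw p.1, hw p.2]
    constructor
    · rintro ⟨hlt, hvw⟩
      split_ifs at hvw <;> omega
    · intro hor
      refine ⟨by omega, by split_ifs <;> omega⟩
  have hset : Finset.univ.filter (fun p : Fin n × Fin n => p.1 < p.2 ∧ w p.2 < w p.1)
      = ((Finset.Ioc (⟨0, h0n⟩ : Fin n) ⟨I, hIn⟩).image fun y => ((⟨0, h0n⟩ : Fin n), y))
        ∪ ((Finset.Ioo (⟨0, h0n⟩ : Fin n) ⟨I, hIn⟩).image fun x => (x, (⟨I, hIn⟩ : Fin n)))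
        ∪ ((Finset.Ioi (⟨J, hJn⟩ : Fin n)).image fun y => ((⟨J, hJn⟩ : Fin n), y))
        ∪ ((Finset.Ioo (⟨J, hJn⟩ : Fin n) ⟨n - 1, hLn⟩).image
            fun x => (x, (⟨n - 1, hLn⟩ : Fin n))) := by
    ext p
    simp only [Finset.mem_filter, Finset.mem_univ, true_and, Finset.mem_union,
      Finset.mem_image, Finset.mem_Ioc, Finset.mem_Ioo, Finset.mem_Ioi, hiff p]
    constructor
    · rintro (⟨ha, hb, hc⟩ | ⟨ha, hb, hc⟩ | ⟨ha, hb⟩ | ⟨ha, hb, hc⟩)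
      · exact Or.inl (Or.inl (Or.inl ⟨p.2, ⟨by rw [Fin.lt_def]; exact hb, by
          rw [Fin.le_def]; exact hc⟩, by rw [Prod.ext_iff]; exact ⟨Fin.ext ha.symm, rfl⟩⟩))
      · exact Or.inl (Or.inl (Or.inr ⟨p.1, ⟨by rw [Fin.lt_def]; exact ha, by
          rw [Fin.lt_def]; exact hb⟩, by rw [Prod.ext_iff]; exact ⟨rfl, Fin.ext hc.symm⟩⟩))
      · exact Or.inl (Or.inr ⟨p.2, by rw [Fin.lt_def]; exact hb, by
          rw [Prod.ext_iff]; exact ⟨Fin.ext ha.symm, rfl⟩⟩)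
      · exact Or.inr ⟨p.1, ⟨by rw [Fin.lt_def]; exact ha, by rw [Fin.lt_def]; exact hb⟩, by
          rw [Prod.ext_iff]; exact ⟨rfl, Fin.ext hc.symm⟩⟩
    · rintro (((⟨y, ⟨hy1, hy2⟩, rfl⟩ | ⟨x, ⟨hx1, hx2⟩, rfl⟩) | ⟨y, hy, rfl⟩) | ⟨x, ⟨hx1, hx2⟩, rfl⟩)
      · exact Or.inl ⟨rfl, hy1, hy2⟩
      · exact Or.inr (Or.inl ⟨hx1, hx2, rfl⟩)
      · exact Or.inr (Or.inr (Or.inl ⟨rfl, hy⟩))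
      · exact Or.inr (Or.inr (Or.inr ⟨hx1, hx2, rfl⟩))
  have inj2 : Function.Injective (fun y : Fin n => ((⟨0, h0n⟩ : Fin n), y)) :=
    fun a b hab => by simpa using congrArg Prod.snd hab
  have inj1 : Function.Injective (fun x : Fin n => (x, (⟨I, hIn⟩ : Fin n))) :=
    fun a b hab => by simpa using congrArg Prod.fst hab
  have inj3 : Function.Injective (fun y : Fin n => ((⟨J, hJn⟩ : Fin n), y)) :=
    fun a b hab => by simpa using congrArg Prod.snd hab
  have inj4 : Function.Injective (fun x : Fin n => (x, (⟨n - 1, hLn⟩ : Fin n))) :=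
    fun a b hab => by simpa using congrArg Prod.fst hab
  have d12 : Disjoint
      ((Finset.Ioc (⟨0, h0n⟩ : Fin n) ⟨I, hIn⟩).image fun y => ((⟨0, h0n⟩ : Fin n), y))
      ((Finset.Ioo (⟨0, h0n⟩ : Fin n) ⟨I, hIn⟩).image fun x => (x, (⟨I, hIn⟩ : Fin n))) := by
    simp only [Finset.disjoint_left, Finset.mem_image, Finset.mem_Ioc, Finset.mem_Ioo]
    rintro p ⟨y, hy, rfl⟩ ⟨x, hx, hyp⟩
    rw [Prod.ext_iff] at hyp
    have e1 : (x : ℕ) = 0 := congrArg Fin.val hyp.1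
    have e2 : (0 : ℕ) < (x : ℕ) := hx.1
    omega
  have d123 : Disjoint
      (((Finset.Ioc (⟨0, h0n⟩ : Fin n) ⟨I, hIn⟩).image fun y => ((⟨0, h0n⟩ : Fin n), y))
        ∪ ((Finset.Ioo (⟨0, h0n⟩ : Fin n) ⟨I, hIn⟩).image fun x => (x, (⟨I, hIn⟩ : Fin n))))
      ((Finset.Ioi (⟨J, hJn⟩ : Fin n)).image fun y => ((⟨J, hJn⟩ : Fin n), y)) := by
    refine Finset.disjoint_union_left.mpr ⟨?_, ?_⟩ <;>
      simp only [Finset.disjoint_left, Finset.mem_image, Finset.mem_Ioc, Finset.mem_Ioo,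
        Finset.mem_Ioi]
    · rintro p ⟨y, hy, rfl⟩ ⟨z, hz, hyp⟩
      rw [Prod.ext_iff] at hyp
      have e1 : (J : ℕ) = 0 := congrArg Fin.val hyp.1
      omega
    · rintro p ⟨x, hx, rfl⟩ ⟨z, hz, hyp⟩
      rw [Prod.ext_iff] at hyp
      have e1 : (J : ℕ) = (x : ℕ) := congrArg Fin.val hyp.1
      have e2 : (x : ℕ) < I := hx.2
      omega
  have d1234 : Disjoint
      ((((Finset.Ioc (⟨0, h0n⟩ : Fin n) ⟨I, hIn⟩).image fun y => ((⟨0, h0n⟩ : Fin n), y))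
        ∪ ((Finset.Ioo (⟨0, h0n⟩ : Fin n) ⟨I, hIn⟩).image fun x => (x, (⟨I, hIn⟩ : Fin n))))
        ∪ ((Finset.Ioi (⟨J, hJn⟩ : Fin n)).image fun y => ((⟨J, hJn⟩ : Fin n), y)))
      ((Finset.Ioo (⟨J, hJn⟩ : Fin n) ⟨n - 1, hLn⟩).image
          fun x => (x, (⟨n - 1, hLn⟩ : Fin n))) := by
    refine Finset.disjoint_union_left.mpr
      ⟨Finset.disjoint_union_left.mpr ⟨?_, ?_⟩, ?_⟩ <;>
      simp only [Finset.disjoint_left, Finset.mem_image, Finset.mem_Ioc, Finset.mem_Ioo,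
        Finset.mem_Ioi]
    · rintro p ⟨y, hy, rfl⟩ ⟨z, hz, hyp⟩
      rw [Prod.ext_iff] at hyp
      have e1 : (z : ℕ) = 0 := congrArg Fin.val hyp.1
      have e2 : (J : ℕ) < (z : ℕ) := hz.1
      omega
    · rintro p ⟨x, hx, rfl⟩ ⟨z, hz, hyp⟩
      rw [Prod.ext_iff] at hyp
      have e1 : (n - 1 : ℕ) = I := congrArg Fin.val hyp.2
      have e2 : (x : ℕ) < I := hx.2
      have := x.isLt
      omega
    · rintro p ⟨y, hy, rfl⟩ ⟨z, hz, hyp⟩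
      rw [Prod.ext_iff] at hyp
      have e1 : (z : ℕ) = J := congrArg Fin.val hyp.1
      have e2 : (J : ℕ) < (z : ℕ) := hz.1
      omega
  rw [invNum, hset, Finset.card_union_of_disjoint d1234, Finset.card_union_of_disjoint d123,
    Finset.card_union_of_disjoint d12, Finset.card_image_of_injective _ inj2,
    Finset.card_image_of_injective _ inj1, Finset.card_image_of_injective _ inj3,
    Finset.card_image_of_injective _ inj4, Fin.card_Ioc, Fin.card_Ioo, Fin.card_Ioi,
    Fin.card_Ioo]
  simp only [Fin.val_mk]
  omega

lemma countR_exc {n I J : ℕ} (hIJ : I < J) (hJn : J < n) (w : Perm (Fin n))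
    (hw : ∀ x : Fin n, (w x : ℕ)
      = if (x:ℕ) = 0 then I else if (x:ℕ) = I then 0
        else if (x:ℕ) = J then n - 1 else if (x:ℕ) = n - 1 then J else (x:ℕ)) :
    excNum w = (if 0 < I then 1 else 0) + (if J < n - 1 then 1 else 0) := by
  have hIn : I < n := by omega
  have h0n : 0 < n := by omega
  have hiff : ∀ x : Fin n, (x < w x) ↔ (((x:ℕ) = 0 ∧ 0 < I) ∨ ((x:ℕ) = J ∧ J < n - 1)) := by
    intro x
    have h1 := x.isLt
    rw [Fin.lt_def, hw x]
    constructor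
    · intro hvw
      split_ifs at hvw <;> omega
    · intro hor
      split_ifs <;> omega
  rw [excNum, Finset.filter_congr (fun x _ => hiff x)]
  by_cases h0 : 0 < I <;> by_cases hJ1 : J < n - 1
  · rw [if_pos h0, if_pos hJ1]
    rw [show Finset.univ.filter
        (fun x : Fin n => (((x:ℕ) = 0 ∧ 0 < I) ∨ ((x:ℕ) = J ∧ J < n - 1)))
        = {(⟨0, h0n⟩ : Fin n), ⟨J, hJn⟩} from by
      ext x
      simp only [Finset.mem_filter, Finset.mem_univ, true_and, Finset.mem_insert,
        Finset.mem_singleton, Fin.ext_iff]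
      omega]
    rw [Finset.card_insert_of_notMem (by
      simp only [Finset.mem_singleton, Fin.ext_iff]
      omega), Finset.card_singleton]
  · rw [if_pos h0, if_neg hJ1]
    rw [show Finset.univ.filter
        (fun x : Fin n => (((x:ℕ) = 0 ∧ 0 < I) ∨ ((x:ℕ) = J ∧ J < n - 1)))
        = {(⟨0, h0n⟩ : Fin n)} from by
      ext x
      simp only [Finset.mem_filter, Finset.mem_univ, true_and, Finset.mem_singleton,
        Fin.ext_iff]
      omega]
    rw [Finset.card_singleton]
  · rw [if_neg h0, if_pos hJ1]
    rw [show Finset.univ.filter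
        (fun x : Fin n => (((x:ℕ) = 0 ∧ 0 < I) ∨ ((x:ℕ) = J ∧ J < n - 1)))
        = {(⟨J, hJn⟩ : Fin n)} from by
      ext x
      simp only [Finset.mem_filter, Finset.mem_univ, true_and, Finset.mem_singleton,
        Fin.ext_iff]
      omega]
    rw [Finset.card_singleton]
  · rw [if_neg h0, if_neg hJ1]
    rw [show Finset.univ.filter
        (fun x : Fin n => (((x:ℕ) = 0 ∧ 0 < I) ∨ ((x:ℕ) = J ∧ J < n - 1)))
        = (∅ : Finset (Fin n)) from by
      ext x
      simp only [Finset.mem_filter, Finset.mem_univ, true_and, Finset.notMem_empty,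
        iff_false]
      omega]
    rw [Finset.card_empty]

/-- for `1 ≤ i < j ≤ n` and `v = (s_{n-1}⋯s_j)(s_1⋯s_{i-1})`,
one has `v · e = (1,i)(j,n)` and `ℓ_(n)(v·e) = ℓ(v)`. -/
theorem rsWord_case_two_cycles (n i j : ℕ) (h1 : 1 ≤ i) (h2 : i < j) (h3 : j ≤ n) :
    rsWord ((List.range' (j - 1) (n - j)).reverse ++ List.range (i - 1)) (1 : Perm (Fin n))
      = Equiv.swap ⟨0, by omega⟩ ⟨i - 1, by omega⟩ *
        Equiv.swap ⟨j - 1, by omega⟩ ⟨n - 1, by omega⟩ ∧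
    invLen (rsWord ((List.range' (j - 1) (n - j)).reverse ++ List.range (i - 1))
        (1 : Perm (Fin n)))
      = invNum ((((List.range' (j - 1) (n - j)).reverse ++ List.range (i - 1)).map
          (adjSwap n)).prod) := by
  have h0n : 0 < n := by omega
  have hA : List.foldr rsStep (1 : Perm (Fin n)) (List.range (i - 1))
      = Equiv.swap (⟨0, by omega⟩ : Fin n) ⟨i - 1, by omega⟩ := by
    have h := lemA (n := n) (i - 1) (by omega) (i - 1) le_rfl
    rw [rsWord] at h
    rw [← h]
    congr 1
    rw [Equiv.swap_self]
    ext x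
    rfl
  have key : rsWord ((List.range' (j - 1) (n - j)).reverse ++ List.range (i - 1))
        (1 : Perm (Fin n))
      = Equiv.swap (⟨j - 1, by omega⟩ : Fin n) ⟨n - 1, by omega⟩ *
          Equiv.swap (⟨0, by omega⟩ : Fin n) ⟨i - 1, by omega⟩ := by
    rw [rsWord, List.foldr_append, hA, List.foldr_reverse]
    have hstart : Equiv.swap (⟨0, by omega⟩ : Fin n) (⟨i - 1, by omega⟩ : Fin n)
        = Equiv.swap (⟨j - 1, by omega⟩ : Fin n) ⟨j - 1, by omega⟩ *
            Equiv.swap (⟨0, by omega⟩ : Fin n) ⟨i - 1, by omega⟩ := by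
      rw [Equiv.swap_self]
      ext x
      rfl
    conv_lhs => rw [hstart]
    have hB := lemB (n := n) (i - 1) (j - 1) (by omega) (n - j) (j - 1) le_rfl (by omega) h0n
    rw [hB]
    ext x
    simp only [Perm.mul_apply, Equiv.swap_apply_def, Fin.ext_iff, apply_ite Fin.val]
    split_ifs <;> omega
  constructor
  · rw [key]
    ext x
    simp only [Perm.mul_apply, Equiv.swap_apply_def, Fin.ext_iff, apply_ite Fin.val]
    split_ifs <;> omega
  · rw [key]
    have hwR : ∀ x : Fin n,
        (((Equiv.swap (⟨j - 1, by omega⟩ : Fin n) ⟨n - 1, by omega⟩ *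
          Equiv.swap (⟨0, by omega⟩ : Fin n) ⟨i - 1, by omega⟩) x : Fin n) : ℕ)
          = if (x : ℕ) = 0 then i - 1 else if (x : ℕ) = i - 1 then 0
            else if (x : ℕ) = j - 1 then n - 1
            else if (x : ℕ) = n - 1 then j - 1 else (x : ℕ) := by
      intro x
      have hx := x.isLt
      simp only [Perm.mul_apply, Equiv.swap_apply_def, apply_ite Fin.val, Fin.ext_iff]
      split_ifs <;> omega
    have hinv := countR_inv (I := i - 1) (J := j - 1) (by omega) (by omega) _ hwR
    have hexc := countR_exc (I := i - 1) (J := j - 1) (by omega) (by omega) _ hwR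
    rw [invLen, hinv, hexc, List.map_append, List.prod_append]
    have hwP : ∀ x : Fin n,
        (((((List.range' (j - 1) (n - j)).reverse.map (adjSwap n)).prod *
          ((List.range (i - 1)).map (adjSwap n)).prod) x : Fin n) : ℕ)
          = if (x : ℕ) < i - 1 then (x : ℕ) + 1 else if (x : ℕ) = i - 1 then 0
            else if (x : ℕ) = j - 1 then n - 1
            else if j - 1 < (x : ℕ) then (x : ℕ) - 1 else (x : ℕ) := by
      intro x
      have hx := x.isLt
      rw [Perm.mul_apply]
      have hd := prodD (n := n) (i - 1) (by omega) x
      have hc := prodC (n := n) (J := j - 1) (n - j) (by omega)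
        ((((List.range (i - 1)).map (adjSwap n)).prod) x)
      rw [hd] at hc
      rw [hc]
      split_ifs <;> omega
    rw [countP (I := i - 1) (J := j - 1) (by omega) (by omega) _ hwP]
    split_ifs <;> omega
end

section
/- Suppose π, π' ∈ S_n are involutions such that π(1) ≠ n but π'(1) = n. If π' = s_i · π for some adjacent transposition s_i, then i = 1 or i = n-1. -/
open Equiv

/-- if `π` does not contain the cycle `(1,n)` but `s_i · π` does,
then `i = 1` or `i = n-1` (0-indexed: `i = 0` or `i = n-2`). -/
theorem rsStep_creates_1n (n i : ℕ) (hi : i + 1 < n) (π π' : Perm (Fin n))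
    (hπ : π * π = 1) (hπ' : π' * π' = 1)
    (h1 : π ⟨0, by omega⟩ ≠ ⟨n - 1, by omega⟩)
    (h2 : π' ⟨0, by omega⟩ = ⟨n - 1, by omega⟩)
    (hact : π' = rsStep i π) :
    i = 0 ∨ i = n - 2 := by
  by_contra hcon
  push_neg at hcon
  obtain ⟨hi0, hin⟩ := hcon
  simp only [rsStep, dif_pos hi] at hact
  have h0 : 0 < n := by omega
  have hl : n - 1 < n := by omega
  have hla : (⟨n - 1, hl⟩ : Fin n) ≠ ⟨i, Nat.lt_of_succ_lt hi⟩ := by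
    simp [Fin.ext_iff]; omega
  have hlb : (⟨n - 1, hl⟩ : Fin n) ≠ ⟨i + 1, hi⟩ := by
    simp [Fin.ext_iff]; omega
  have h0a : (⟨0, h0⟩ : Fin n) ≠ ⟨i, Nat.lt_of_succ_lt hi⟩ := by
    simp [Fin.ext_iff]; omega
  have h0b : (⟨0, h0⟩ : Fin n) ≠ ⟨i + 1, hi⟩ := by
    simp [Fin.ext_iff]
  have hsl := Equiv.swap_apply_of_ne_of_ne hla hlb
  have hs0 := Equiv.swap_apply_of_ne_of_ne h0a h0b
  have key : ∀ x : Fin n,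
      Equiv.swap (⟨i, Nat.lt_of_succ_lt hi⟩ : Fin n) ⟨i + 1, hi⟩ x = ⟨n - 1, hl⟩ →
      x = ⟨n - 1, hl⟩ := fun x hx =>
    (Equiv.swap _ _).injective (hx.trans hsl.symm)
  split_ifs at hact with c1 c2
  · exact h1 (hact ▸ h2)
  · subst hact
    exact h1 (key (π ⟨0, h0⟩) h2)
  · subst hact
    have h2' : Equiv.swap (⟨i, Nat.lt_of_succ_lt hi⟩ : Fin n) ⟨i + 1, hi⟩
        (π (Equiv.swap (⟨i, Nat.lt_of_succ_lt hi⟩ : Fin n) ⟨i + 1, hi⟩ ⟨0, h0⟩)) =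
        ⟨n - 1, hl⟩ := h2
    rw [hs0] at h2'
    exact h1 (key _ h2')
end

section
/- For the Richardson-Springer action of a permutation w on an involution π (defined via any reduced expression of w), one has ℓ_(n)(w · π) ≤ ℓ_(n)(π) + ℓ(w). -/
open Equiv

section Aux

open Finset

lemma invol_apply {n : ℕ} {σ : Perm (Fin n)} (h : σ * σ = 1) (x : Fin n) : σ (σ x) = x := by
  rw [← Perm.mul_apply, h, Perm.one_apply]

lemma swap_lt_adj {n : ℕ} {a b : Fin n} (hab : (b:ℕ) = (a:ℕ)+1) {u v : Fin n}
    (h : Equiv.swap a b u < Equiv.swap a b v) :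
    u < v ∨ (u = a ∧ v = b) ∨ (u = b ∧ v = a) := by
  rw [Equiv.swap_apply_def, Equiv.swap_apply_def] at h
  split_ifs at h <;>
    simp only [Fin.lt_def, Fin.ext_iff] at * <;> omega

lemma invNum_swapL_le {n : ℕ} {a b : Fin n} (hab : (b:ℕ) = (a:ℕ)+1) (σ : Perm (Fin n)) :
    invNum (Equiv.swap a b * σ) ≤ invNum σ + 1 := by
  set q : Fin n × Fin n :=
    if σ⁻¹ a < σ⁻¹ b then (σ⁻¹ a, σ⁻¹ b) else (σ⁻¹ b, σ⁻¹ a) with hq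
  have hsub : (Finset.univ.filter
      (fun p : Fin n × Fin n => p.1 < p.2 ∧ (Equiv.swap a b * σ) p.2 < (Equiv.swap a b * σ) p.1))
      ⊆ insert q (Finset.univ.filter (fun p : Fin n × Fin n => p.1 < p.2 ∧ σ p.2 < σ p.1)) := by
    intro p hp
    simp only [Finset.mem_filter, Finset.mem_univ, true_and] at hp
    simp only [Perm.mul_apply] at hp
    obtain ⟨h1, h2⟩ := hp
    rcases swap_lt_adj hab h2 with h | ⟨e1, e2⟩ | ⟨e1, e2⟩
    · exact Finset.mem_insert_of_mem (by simp [Finset.mem_filter, h1, h])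
    · have hp1 : p.1 = σ⁻¹ b := by rw [← e2]; simp
      have hp2 : p.2 = σ⁻¹ a := by rw [← e1]; simp
      have hlt : ¬ σ⁻¹ a < σ⁻¹ b := by rw [← hp1, ← hp2]; exact fun hc => absurd h1 (asymm hc)
      have : p = q := by rw [hq, if_neg hlt]; exact Prod.ext hp1 hp2
      rw [this]; exact Finset.mem_insert_self _ _
    · have hp1 : p.1 = σ⁻¹ a := by rw [← e2]; simp
      have hp2 : p.2 = σ⁻¹ b := by rw [← e1]; simp
      have hlt : σ⁻¹ a < σ⁻¹ b := by rw [← hp1, ← hp2]; exact h1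
      have : p = q := by rw [hq, if_pos hlt]; exact Prod.ext hp1 hp2
      rw [this]; exact Finset.mem_insert_self _ _
  calc invNum (Equiv.swap a b * σ) ≤ (insert q (Finset.univ.filter
        (fun p : Fin n × Fin n => p.1 < p.2 ∧ σ p.2 < σ p.1))).card :=
        Finset.card_le_card hsub
    _ ≤ invNum σ + 1 := Finset.card_insert_le _ _

lemma invNum_swapR_le {n : ℕ} {a b : Fin n} (hab : (b:ℕ) = (a:ℕ)+1) (σ : Perm (Fin n)) :
    invNum (σ * Equiv.swap a b) ≤ invNum σ + 1 := by
  have hba : ¬ (b < a) := by rw [Fin.lt_def]; omega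
  have hmem : ∀ p ∈ (Finset.univ.filter
      (fun p : Fin n × Fin n => p.1 < p.2 ∧ (σ * Equiv.swap a b) p.2 < (σ * Equiv.swap a b) p.1)),
      (if p = (a, b) then ((a : Fin n), (b : Fin n))
        else (Equiv.swap a b p.1, Equiv.swap a b p.2)) ∈
      insert ((a : Fin n), (b : Fin n)) (Finset.univ.filter
        (fun p : Fin n × Fin n => p.1 < p.2 ∧ σ p.2 < σ p.1)) := by
    intro p hp
    simp only [Finset.mem_filter, Finset.mem_univ, true_and] at hp
    simp only [Perm.mul_apply] at hp
    obtain ⟨h1, h2⟩ := hp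
    by_cases hpab : p = (a, b)
    · rw [if_pos hpab]; exact Finset.mem_insert_self _ _
    · rw [if_neg hpab]
      apply Finset.mem_insert_of_mem
      simp only [Finset.mem_filter, Finset.mem_univ, true_and]
      refine ⟨?_, h2⟩
      have h1' : Equiv.swap a b (Equiv.swap a b p.1) < Equiv.swap a b (Equiv.swap a b p.2) := by
        simpa using h1
      rcases swap_lt_adj hab h1' with h | ⟨e1, e2⟩ | ⟨e1, e2⟩
      · exact h
      · exfalso
        have e1' : p.1 = b := by have := congrArg (Equiv.swap a b) e1; simpa using this
        have e2' : p.2 = a := by have := congrArg (Equiv.swap a b) e2; simpa using this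
        rw [e1', e2'] at h1; exact hba h1
      · exfalso
        apply hpab
        have e1' : p.1 = a := by have := congrArg (Equiv.swap a b) e1; simpa using this
        have e2' : p.2 = b := by have := congrArg (Equiv.swap a b) e2; simpa using this
        exact Prod.ext e1' e2'
  have hinj : Set.InjOn (fun p : Fin n × Fin n => if p = (a, b) then ((a : Fin n), (b : Fin n))
        else (Equiv.swap a b p.1, Equiv.swap a b p.2))
      ((Finset.univ.filter
      (fun p : Fin n × Fin n => p.1 < p.2 ∧ (σ * Equiv.swap a b) p.2 < (σ * Equiv.swap a b) p.1))
      : Finset (Fin n × Fin n)) := by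
    intro p hp p' hp' hf
    simp only at hf
    by_cases h1 : p = (a, b) <;> by_cases h2 : p' = (a, b)
    · rw [h1, h2]
    · exfalso
      rw [if_pos h1, if_neg h2] at hf
      have e1 : Equiv.swap a b p'.1 = a := (congrArg Prod.fst hf).symm
      have e2 : Equiv.swap a b p'.2 = b := (congrArg Prod.snd hf).symm
      have e1' : p'.1 = b := by have := congrArg (Equiv.swap a b) e1; simpa using this
      have e2' : p'.2 = a := by have := congrArg (Equiv.swap a b) e2; simpa using this
      simp only [Finset.coe_filter, Set.mem_setOf_eq] at hp'
      rw [e1', e2'] at hp'; exact hba hp'.2.1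
    · exfalso
      rw [if_neg h1, if_pos h2] at hf
      have e1 : Equiv.swap a b p.1 = a := congrArg Prod.fst hf
      have e2 : Equiv.swap a b p.2 = b := congrArg Prod.snd hf
      have e1' : p.1 = b := by have := congrArg (Equiv.swap a b) e1; simpa using this
      have e2' : p.2 = a := by have := congrArg (Equiv.swap a b) e2; simpa using this
      simp only [Finset.coe_filter, Set.mem_setOf_eq] at hp
      rw [e1', e2'] at hp; exact hba hp.2.1
    · rw [if_neg h1, if_neg h2] at hf
      have e1 := congrArg Prod.fst hf
      have e2 := congrArg Prod.snd hf
      simp only at e1 e2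
      exact Prod.ext ((Equiv.swap a b).injective e1) ((Equiv.swap a b).injective e2)
  exact le_trans (Finset.card_le_card_of_injOn _ hmem hinj) (Finset.card_insert_le _ _)

lemma exc2 {n : ℕ} (σ : Perm (Fin n)) (hσ : ∀ x, σ (σ x) = x) :
    2 * excNum σ + (Finset.univ.filter (fun i : Fin n => σ i = i)).card = n := by
  have e1 : (Finset.univ.filter (fun i : Fin n => σ i < i)).card = excNum σ := by
    apply Finset.card_bij' (fun i _ => σ i) (fun j _ => σ j)
    · intro i hi
      simp only [Finset.mem_filter, Finset.mem_univ, true_and] at *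
      rw [hσ]; exact hi
    · intro j hj
      simp only [Finset.mem_filter, Finset.mem_univ, true_and] at *
      rw [hσ]; exact hj
    · intro i _; exact hσ i
    · intro j _; exact hσ j
  have e2 : (Finset.univ.filter (fun i : Fin n => ¬ i < σ i)) =
      (Finset.univ.filter (fun i : Fin n => σ i < i)) ∪
      (Finset.univ.filter (fun i : Fin n => σ i = i)) := by
    ext i
    simp only [Finset.mem_filter, Finset.mem_univ, true_and, Finset.mem_union]
    rcases lt_trichotomy i (σ i) with h | h | h
    · constructor
      · intro hc; exact absurd h hc
      · rintro (hc | hc)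
        · exact absurd (h.trans hc) (lt_irrefl _)
        · rw [hc] at h; exact absurd h (lt_irrefl _)
    · simp [← h, lt_irrefl]
    · simp [h, h.ne, not_lt_of_gt h, le_of_lt h]
  have e3 := Finset.card_filter_add_card_filter_not
    (s := (Finset.univ : Finset (Fin n))) (p := fun i => i < σ i)
  rw [e2, Finset.card_union_of_disjoint] at e3
  · rw [Finset.card_univ, Fintype.card_fin] at e3
    rw [e1] at e3
    unfold excNum at *
    omega
  · rw [Finset.disjoint_filter]
    intro i _ h1 h2
    rw [h2] at h1; exact lt_irrefl _ h1

lemma fix_conj {n : ℕ} (σ : Perm (Fin n)) (a b : Fin n) :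
    (Finset.univ.filter (fun i : Fin n => (Equiv.swap a b * σ * Equiv.swap a b) i = i)).card =
    (Finset.univ.filter (fun i : Fin n => σ i = i)).card := by
  apply Finset.card_bij' (fun i _ => Equiv.swap a b i) (fun j _ => Equiv.swap a b j)
  · intro i hi
    simp only [Finset.mem_filter, Finset.mem_univ, true_and] at *
    simp only [Perm.mul_apply] at *
    have := congrArg (Equiv.swap a b) hi
    simpa using this
  · intro j hj
    simp only [Finset.mem_filter, Finset.mem_univ, true_and] at *
    simp only [Perm.mul_apply] at *
    simp [Equiv.swap_apply_self, hj]
  · intro i _; exact Equiv.swap_apply_self _ _ _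
  · intro j _; exact Equiv.swap_apply_self _ _ _

lemma conj_invol {n : ℕ} {σ : Perm (Fin n)} (hσ : σ * σ = 1) (a b : Fin n) :
    (Equiv.swap a b * σ * Equiv.swap a b) * (Equiv.swap a b * σ * Equiv.swap a b) = 1 := by
  apply Equiv.ext; intro x
  simp [Perm.mul_apply, Equiv.swap_apply_self, invol_apply hσ]

lemma exc_conj {n : ℕ} {σ : Perm (Fin n)} (hσ : σ * σ = 1) (a b : Fin n) :
    excNum (Equiv.swap a b * σ * Equiv.swap a b) = excNum σ := by
  have h1 := exc2 σ (invol_apply hσ)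
  have h2 := exc2 _ (invol_apply (conj_invol hσ a b))
  rw [fix_conj] at h2
  omega

lemma swapmul_invol {n : ℕ} {σ : Perm (Fin n)} {a b : Fin n} (hσ : σ * σ = 1)
    (ha : σ a = a) (hb : σ b = b) :
    (Equiv.swap a b * σ) * (Equiv.swap a b * σ) = 1 := by
  apply Equiv.ext; intro x
  simp only [Perm.mul_apply, Perm.one_apply]
  rcases eq_or_ne (σ x) a with h | h
  · have hx : x = a := σ.injective (h.trans ha.symm)
    subst hx
    rw [ha, Equiv.swap_apply_left, hb, Equiv.swap_apply_right]
  · rcases eq_or_ne (σ x) b with h2 | h2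
    · have hx : x = b := σ.injective (h2.trans hb.symm)
      subst hx
      rw [hb, Equiv.swap_apply_right, ha, Equiv.swap_apply_left]
    · rw [Equiv.swap_apply_of_ne_of_ne h h2, invol_apply hσ]
      apply Equiv.swap_apply_of_ne_of_ne
      · intro hx; rw [hx, ha] at h; exact h rfl
      · intro hx; rw [hx, hb] at h2; exact h2 rfl

lemma exc_swapmul_le {n : ℕ} {σ : Perm (Fin n)} {a b : Fin n} (hab : (b:ℕ) = (a:ℕ)+1)
    (ha : σ a = a) (hb : σ b = b) :
    excNum (Equiv.swap a b * σ) ≤ excNum σ + 1 := by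
  have hsub : (Finset.univ.filter (fun i : Fin n => i < (Equiv.swap a b * σ) i)) ⊆
      insert a (Finset.univ.filter (fun i : Fin n => i < σ i)) := by
    intro i hi
    simp only [Finset.mem_filter, Finset.mem_univ, true_and] at hi
    simp only [Perm.mul_apply] at hi
    rcases eq_or_ne (σ i) a with h | h
    · have : i = a := σ.injective (h.trans ha.symm)
      rw [this]; exact Finset.mem_insert_self _ _
    · rcases eq_or_ne (σ i) b with h2 | h2
      · exfalso
        have hib : i = b := σ.injective (h2.trans hb.symm)
        rw [h2, Equiv.swap_apply_right, hib] at hi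
        rw [Fin.lt_def] at hi
        omega
      · rw [Equiv.swap_apply_of_ne_of_ne h h2] at hi
        exact Finset.mem_insert_of_mem (by simp [Finset.mem_filter, hi])
  calc excNum (Equiv.swap a b * σ)
      ≤ (insert a (Finset.univ.filter (fun i : Fin n => i < σ i))).card :=
        Finset.card_le_card hsub
    _ ≤ excNum σ + 1 := Finset.card_insert_le _ _

lemma step_invol {n : ℕ} (i : ℕ) {π : Perm (Fin n)} (hπ : π * π = 1) :
    rsStep i π * rsStep i π = 1 := by
  unfold rsStep
  dsimp only
  split_ifs with h h1 h2
  · exact hπ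
  · exact swapmul_invol hπ h2.1 h2.2
  · exact conj_invol hπ _ _
  · exact hπ

lemma step_bound {n : ℕ} (i : ℕ) {π : Perm (Fin n)} (hπ : π * π = 1) :
    invNum (rsStep i π) + excNum (rsStep i π) ≤ invNum π + excNum π + 2 := by
  unfold rsStep
  dsimp only
  split_ifs with h h1 h2
  · omega
  · have hab : ((⟨i+1, h⟩ : Fin n) : ℕ) = ((⟨i, Nat.lt_of_succ_lt h⟩ : Fin n) : ℕ) + 1 := rfl
    have i1 := invNum_swapL_le hab π
    have e1 := exc_swapmul_le hab h2.1 h2.2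
    omega
  · have hab : ((⟨i+1, h⟩ : Fin n) : ℕ) = ((⟨i, Nat.lt_of_succ_lt h⟩ : Fin n) : ℕ) + 1 := rfl
    set a : Fin n := ⟨i, Nat.lt_of_succ_lt h⟩
    set b : Fin n := ⟨i+1, h⟩
    have i1 : invNum (Equiv.swap a b * π * Equiv.swap a b) ≤ invNum π + 2 := by
      rw [mul_assoc]
      calc invNum (Equiv.swap a b * (π * Equiv.swap a b))
          ≤ invNum (π * Equiv.swap a b) + 1 := invNum_swapL_le hab _
        _ ≤ invNum π + 2 := by have := invNum_swapR_le hab π; omega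
    have e1 := exc_conj hπ a b
    omega
  · omega

lemma word_invol {n : ℕ} (l : List ℕ) {π : Perm (Fin n)} (hπ : π * π = 1) :
    rsWord l π * rsWord l π = 1 := by
  induction l with
  | nil => exact hπ
  | cons i l ih => exact step_invol i ih

lemma word_bound {n : ℕ} (l : List ℕ) {π : Perm (Fin n)} (hπ : π * π = 1) :
    invNum (rsWord l π) + excNum (rsWord l π) ≤ invNum π + excNum π + 2 * l.length := by
  induction l with
  | nil => simp [rsWord]
  | cons i l ih =>
    have h1 : rsWord (i :: l) π = rsStep i (rsWord l π) := rfl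
    have h2 := step_bound i (word_invol l hπ)
    rw [h1]
    simp only [List.length_cons]
    omega

end Aux

/-- `ℓ_(n)(w · π) ≤ ℓ_(n)(π) + ℓ(w)` for any reduced word of `w`. -/
theorem invLen_rsWord_le (n : ℕ) (π : Perm (Fin n)) (hπ : π * π = 1)
    (w : Perm (Fin n)) (l : List ℕ) (hl : IsReducedWord l w) :
    invLen (rsWord l π) ≤ invLen π + invNum w := by
  obtain ⟨-, -, hlen⟩ := hl
  have hb := word_bound l hπ
  unfold invLen
  omega
end
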